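/- arXiv:2502.19325 — 7 statements merged into one kernel-verified Lean document; each statement's English description precedes it below -/
import Mathlib

section
/- (Lemma 1, PTW recursion) For every depth D ≥ 1, every t with 1 ≤ t ≤ 2^D, every e_{1:t} ∈ {0,1}^t and every a_{1:t} ∈ 𝒜^t, setting k := 2^{D−1}, one has PTW-KTE_D(e_{1:t} || a_{1:t}) = (1/2)·KTE(e_{1:t} || a_{1:t}) + (1/2)·PTW-KTE_{D−1}(e_{1:min(t,k)} || a_{1:min(t,k)})·PTW-KTE_{D−1}(e_{k+1:t} || a_{k+1:t}), where the last factor is defined to be 1 when t ≤ k, and PTW-KTE_0(e || a) := KTE(e || a). -/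
/-- The Beta function `B(a,b) = Γ(a)Γ(b)/Γ(a+b)`. -/
noncomputable def betaFn (a b : ℝ) : ℝ := Real.Gamma a * Real.Gamma b / Real.Gamma (a + b)

/-- The Krichevsky–Trofimov probability of a binary string with `z` zeros and `o` ones:
`KT(x) = (1/π) · B(z + 1/2, o + 1/2)`.  (The empty string gets probability 1.) -/
noncomputable def ktProb (z o : ℕ) : ℝ :=
  betaFn ((z : ℝ) + 1 / 2) ((o : ℝ) + 1 / 2) / Real.pi

/-- `KTE(e_{c:d} ‖ a_{c:d}) := ∏_{x ∈ 𝒜} KT(e^x_{c:d})` where `e^x_{c:d}` is the subsequence of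
the percepts `e_i`, `c ≤ i ≤ d`, with `a_i = x`. -/
noncomputable def kteSeg {α : Type*} [Fintype α] [DecidableEq α]
    (e : ℕ → Bool) (a : ℕ → α) (c d : ℕ) : ℝ :=
  ∏ x : α, ktProb
    (((Finset.Icc c d).filter fun i => a i = x ∧ e i = false).card)
    (((Finset.Icc c d).filter fun i => a i = x ∧ e i = true).card)

/-- `CD D t` is the set `C_D(t)` of binary temporal partitions of `{t, …, t + 2^D − 1}`:
`C_0(t) = {{(t,t)}}` and
`C_{D+1}(t) = {{(t, t+2^{D+1}−1)}} ∪ {S₁ ∪ S₂ : S₁ ∈ C_D(t), S₂ ∈ C_D(t + 2^D)}`. -/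
def CD : ℕ → ℕ → Finset (Finset (ℕ × ℕ))
  | 0, t => {{(t, t)}}
  | D + 1, t =>
      insert {(t, t + 2 ^ (D + 1) - 1)}
        ((CD D t ×ˢ CD D (t + 2 ^ D)).image fun p => p.1 ∪ p.2)

/-- The exponent `Γ_D(𝒫)`, defined recursively by `Γ_0({(t,t)}) = 0`,
`Γ_{D+1}({(t, t+2^{D+1}−1)}) = 1`, and `Γ_{D+1}(S₁ ∪ S₂) = 1 + Γ_D(S₁) + Γ_D(S₂)`
(the two halves `S₁, S₂` of a split partition are recovered by filtering). -/
def GammaD : ℕ → ℕ → Finset (ℕ × ℕ) → ℕ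
  | 0, _, _ => 0
  | D + 1, t, P =>
      if P = {(t, t + 2 ^ (D + 1) - 1)} then 1
      else 1 + GammaD D t (P.filter fun s => s.2 < t + 2 ^ D)
             + GammaD D (t + 2 ^ D) (P.filter fun s => t + 2 ^ D ≤ s.1)

/-- `PTW-KTE_D` started at time `t0`, evaluated on the data up to time `t`:
`Σ_{𝒫 ∈ C_D(t0)} 2^{−Γ_D(𝒫)} ∏_{(c,d) ∈ 𝒫, c ≤ t} KTE(e_{c:min(d,t)} ‖ a_{c:min(d,t)})`. -/
noncomputable def ptwKTE {α : Type*} [Fintype α] [DecidableEq α]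
    (D t0 : ℕ) (e : ℕ → Bool) (a : ℕ → α) (t : ℕ) : ℝ :=
  ∑ P ∈ CD D t0, (2 : ℝ) ^ (-(GammaD D t0 P : ℤ)) *
    ∏ s ∈ P.filter fun s => s.1 ≤ t, kteSeg e a s.1 (min s.2 t)

/-- The active segments at time `t`: segments containing `t` that belong to some binary
temporal partition in `C_D := C_D(1)`. -/
def ActiveSegments (D t : ℕ) : Set (ℕ × ℕ) :=
  {s : ℕ × ℕ | s.1 ≤ t ∧ t ≤ s.2 ∧ ∃ P ∈ CD D 1, s ∈ P}

lemma CD_bounds : ∀ D t0 P, P ∈ CD D t0 → ∀ s ∈ P,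
    t0 ≤ s.1 ∧ s.1 ≤ s.2 ∧ s.2 ≤ t0 + 2 ^ D - 1 := by
  intro D
  induction D with
  | zero =>
    intro t0 P hP s hs
    simp [CD] at hP
    subst hP
    simp at hs
    subst hs
    simp
  | succ D ih =>
    intro t0 P hP s hs
    have h1 : (1:ℕ) ≤ 2 ^ D := Nat.one_le_two_pow
    have hp : (2:ℕ) ^ (D + 1) = 2 ^ D + 2 ^ D := by ring
    simp only [CD, Finset.mem_insert, Finset.mem_image, Finset.mem_product] at hP
    rcases hP with rfl | ⟨⟨S1, S2⟩, ⟨hS1, hS2⟩, rfl⟩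
    · simp at hs
      subst hs
      simp
      omega
    · rcases Finset.mem_union.1 hs with h | h
      · have := ih t0 S1 hS1 s h
        omega
      · have := ih (t0 + 2 ^ D) S2 hS2 s h
        omega

lemma CD_filter_left {D t0 : ℕ} {S1 S2 : Finset (ℕ × ℕ)}
    (h1 : S1 ∈ CD D t0) (h2 : S2 ∈ CD D (t0 + 2 ^ D)) :
    ((S1 ∪ S2).filter fun s => s.2 < t0 + 2 ^ D) = S1 := by
  have hb1 := CD_bounds D t0 S1 h1
  have hb2 := CD_bounds D (t0 + 2 ^ D) S2 h2
  have h1d : (1:ℕ) ≤ 2 ^ D := Nat.one_le_two_pow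
  ext s
  simp only [Finset.mem_filter, Finset.mem_union]
  constructor
  · rintro ⟨h | h, hlt⟩
    · exact h
    · have := hb2 s h; omega
  · intro h
    have := hb1 s h
    exact ⟨Or.inl h, by omega⟩

lemma CD_filter_right {D t0 : ℕ} {S1 S2 : Finset (ℕ × ℕ)}
    (h1 : S1 ∈ CD D t0) (h2 : S2 ∈ CD D (t0 + 2 ^ D)) :
    ((S1 ∪ S2).filter fun s => t0 + 2 ^ D ≤ s.1) = S2 := by
  have hb1 := CD_bounds D t0 S1 h1
  have hb2 := CD_bounds D (t0 + 2 ^ D) S2 h2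
  have h1d : (1:ℕ) ≤ 2 ^ D := Nat.one_le_two_pow
  ext s
  simp only [Finset.mem_filter, Finset.mem_union]
  constructor
  · rintro ⟨h | h, hle⟩
    · have := hb1 s h; omega
    · exact h
  · intro h
    have := hb2 s h
    exact ⟨Or.inr h, by omega⟩

lemma CD_union_ne {D t0 : ℕ} {S1 S2 : Finset (ℕ × ℕ)}
    (h1 : S1 ∈ CD D t0) (h2 : S2 ∈ CD D (t0 + 2 ^ D)) :
    S1 ∪ S2 ≠ {(t0, t0 + 2 ^ (D + 1) - 1)} := by
  intro h
  have hmem : (t0, t0 + 2 ^ (D + 1) - 1) ∈ S1 ∪ S2 := by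
    rw [h]; simp
  have h1d : (1:ℕ) ≤ 2 ^ D := Nat.one_le_two_pow
  have hp : (2:ℕ) ^ (D + 1) = 2 ^ D + 2 ^ D := by ring
  rcases Finset.mem_union.1 hmem with h | h
  · have := CD_bounds D t0 S1 h1 _ h
    simp at this <;> omega
  · have := CD_bounds D (t0 + 2 ^ D) S2 h2 _ h
    simp at this <;> omega

lemma CD_disjoint {D t0 : ℕ} {S1 S2 : Finset (ℕ × ℕ)}
    (h1 : S1 ∈ CD D t0) (h2 : S2 ∈ CD D (t0 + 2 ^ D)) :
    Disjoint S1 S2 := by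
  rw [Finset.disjoint_left]
  intro s hs1 hs2
  have := CD_bounds D t0 S1 h1 s hs1
  have := CD_bounds D (t0 + 2 ^ D) S2 h2 s hs2
  have h1d : (1:ℕ) ≤ 2 ^ D := Nat.one_le_two_pow
  omega

lemma GammaD_union {D t0 : ℕ} {S1 S2 : Finset (ℕ × ℕ)}
    (h1 : S1 ∈ CD D t0) (h2 : S2 ∈ CD D (t0 + 2 ^ D)) :
    GammaD (D + 1) t0 (S1 ∪ S2) =
      1 + GammaD D t0 S1 + GammaD D (t0 + 2 ^ D) S2 := by
  rw [GammaD, if_neg (CD_union_ne h1 h2), CD_filter_left h1 h2, CD_filter_right h1 h2]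

lemma sum_CD_succ (D t0 : ℕ) (f : Finset (ℕ × ℕ) → ℝ) :
    ∑ P ∈ CD (D + 1) t0, f P =
      f {(t0, t0 + 2 ^ (D + 1) - 1)} +
        ∑ S1 ∈ CD D t0, ∑ S2 ∈ CD D (t0 + 2 ^ D), f (S1 ∪ S2) := by
  rw [show CD (D + 1) t0 = insert {(t0, t0 + 2 ^ (D + 1) - 1)}
        ((CD D t0 ×ˢ CD D (t0 + 2 ^ D)).image fun p => p.1 ∪ p.2) from rfl]
  rw [Finset.sum_insert]
  · congr 1
    rw [Finset.sum_image, Finset.sum_product]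
    rintro ⟨S1, S2⟩ hp ⟨T1, T2⟩ hq h
    simp only [Finset.mem_coe, Finset.mem_product] at hp hq h
    have e1 : S1 = T1 := by
      rw [← CD_filter_left hp.1 hp.2, h, CD_filter_left hq.1 hq.2]
    have e2 : S2 = T2 := by
      rw [← CD_filter_right hp.1 hp.2, h, CD_filter_right hq.1 hq.2]
    rw [e1, e2]
  · simp only [Finset.mem_image, Finset.mem_product, not_exists]
    rintro ⟨S1, S2⟩ ⟨⟨h1, h2⟩, h⟩
    exact CD_union_ne h1 h2 h

lemma gamma_sum : ∀ D t0, ∑ P ∈ CD D t0, (2:ℝ) ^ (-(GammaD D t0 P : ℤ)) = 1 := by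
  intro D
  induction D with
  | zero => intro t0; simp [CD, GammaD]
  | succ D ih =>
    intro t0
    rw [sum_CD_succ]
    have hG : GammaD (D + 1) t0 {(t0, t0 + 2 ^ (D + 1) - 1)} = 1 := by
      rw [GammaD, if_pos rfl]
    rw [hG]
    have : ∀ S1 ∈ CD D t0, ∀ S2 ∈ CD D (t0 + 2 ^ D),
        (2:ℝ) ^ (-(GammaD (D + 1) t0 (S1 ∪ S2) : ℤ)) =
          (1 / 2) * (2:ℝ) ^ (-(GammaD D t0 S1 : ℤ)) * (2:ℝ) ^ (-(GammaD D (t0 + 2 ^ D) S2 : ℤ)) := by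
      intro S1 h1 S2 h2
      rw [GammaD_union h1 h2]
      have hc : (-(↑(1 + GammaD D t0 S1 + GammaD D (t0 + 2 ^ D) S2) : ℤ)) =
          (-1) + (-(GammaD D t0 S1 : ℤ)) + (-(GammaD D (t0 + 2 ^ D) S2 : ℤ)) := by
        push_cast; ring
      rw [hc, zpow_add₀ (two_ne_zero), zpow_add₀ (two_ne_zero)]
      norm_num
    rw [Finset.sum_congr rfl fun S1 h1 => Finset.sum_congr rfl fun S2 h2 => this S1 h1 S2 h2]
    simp only [mul_assoc, ← Finset.mul_sum, ih, mul_one]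
    norm_num

lemma ptw_empty {α : Type*} [Fintype α] [DecidableEq α]
    (D t0 t : ℕ) (e : ℕ → Bool) (a : ℕ → α) (h : t < t0) :
    ptwKTE D t0 e a t = 1 := by
  have heq : ptwKTE D t0 e a t = ∑ P ∈ CD D t0, (2:ℝ) ^ (-(GammaD D t0 P : ℤ)) := by
    unfold ptwKTE
    apply Finset.sum_congr rfl
    intro P hP
    rw [Finset.filter_eq_empty_iff.2 ?_, Finset.prod_empty, mul_one]
    intro s hs
    have := CD_bounds D t0 P hP s hs
    omega
  rw [heq, gamma_sum]

lemma ptw_clip {α : Type*} [Fintype α] [DecidableEq α]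
    (D t0 t t' : ℕ) (e : ℕ → Bool) (a : ℕ → α)
    (h1 : t0 + 2 ^ D - 1 ≤ t') (h2 : t' ≤ t) :
    ptwKTE D t0 e a t = ptwKTE D t0 e a t' := by
  unfold ptwKTE
  apply Finset.sum_congr rfl
  intro P hP
  congr 1
  have hfil : ∀ u, t0 + 2 ^ D - 1 ≤ u → (P.filter fun s => s.1 ≤ u) = P := by
    intro u hu
    apply Finset.filter_true_of_mem
    intro s hs
    have := CD_bounds D t0 P hP s hs
    omega
  rw [hfil t (le_trans h1 h2), hfil t' h1]
  apply Finset.prod_congr rfl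
  intro s hs
  have hb := CD_bounds D t0 P hP s hs
  have hm : min s.2 t = min s.2 t' := by omega
  rw [hm]

lemma ptw_succ {α : Type*} [Fintype α] [DecidableEq α]
    (D t0 : ℕ) (e : ℕ → Bool) (a : ℕ → α) (t : ℕ) (ht : t0 ≤ t) :
    ptwKTE (D + 1) t0 e a t =
      1 / 2 * kteSeg e a t0 (min (t0 + 2 ^ (D + 1) - 1) t) +
        1 / 2 * ptwKTE D t0 e a t * ptwKTE D (t0 + 2 ^ D) e a t := by
  unfold ptwKTE
  rw [sum_CD_succ]
  have key : ∀ S1 ∈ CD D t0, ∀ S2 ∈ CD D (t0 + 2 ^ D),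
      (2:ℝ) ^ (-(GammaD (D + 1) t0 (S1 ∪ S2) : ℤ)) *
          ∏ s ∈ (S1 ∪ S2).filter fun s => s.1 ≤ t, kteSeg e a s.1 (min s.2 t) =
        1 / 2 * ((2:ℝ) ^ (-(GammaD D t0 S1 : ℤ)) *
            ∏ s ∈ S1.filter fun s => s.1 ≤ t, kteSeg e a s.1 (min s.2 t)) *
          ((2:ℝ) ^ (-(GammaD D (t0 + 2 ^ D) S2 : ℤ)) *
            ∏ s ∈ S2.filter fun s => s.1 ≤ t, kteSeg e a s.1 (min s.2 t)) := by
    intro S1 h1 S2 h2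
    rw [GammaD_union h1 h2, Finset.filter_union,
      Finset.prod_union (Finset.disjoint_filter_filter (CD_disjoint h1 h2))]
    have hc : (-(↑(1 + GammaD D t0 S1 + GammaD D (t0 + 2 ^ D) S2) : ℤ)) =
        (-1) + (-(GammaD D t0 S1 : ℤ)) + (-(GammaD D (t0 + 2 ^ D) S2 : ℤ)) := by
      push_cast; ring
    rw [hc, zpow_add₀ (two_ne_zero), zpow_add₀ (two_ne_zero)]
    norm_num
    ring
  rw [Finset.sum_congr rfl fun S1 h1 => Finset.sum_congr rfl fun S2 h2 => key S1 h1 S2 h2]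
  congr 1
  · have hG : GammaD (D + 1) t0 {(t0, t0 + 2 ^ (D + 1) - 1)} = 1 := by
      rw [GammaD, if_pos rfl]
    rw [hG]
    have hfil : (({(t0, t0 + 2 ^ (D + 1) - 1)} : Finset (ℕ × ℕ)).filter fun s => s.1 ≤ t) =
        {(t0, t0 + 2 ^ (D + 1) - 1)} := by
      apply Finset.filter_true_of_mem
      intro s hs
      simp at hs
      subst hs
      exact ht
    rw [hfil, Finset.prod_singleton]
    norm_num [min_comm]
  · simp only [mul_assoc, ← Finset.mul_sum]
    simp only [← mul_assoc]
    rw [← Finset.sum_mul, mul_assoc]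

/-- **Lemma 1 (PTW recursion).** For every depth `D ≥ 1` and every `1 ≤ t ≤ 2^D`, with
`k := 2^{D−1}`,
`PTW-KTE_D(e_{1:t}‖a_{1:t}) = (1/2)·KTE(e_{1:t}‖a_{1:t})
  + (1/2)·PTW-KTE_{D−1}(e_{1:min(t,k)}‖a_{1:min(t,k)})·PTW-KTE_{D−1}(e_{k+1:t}‖a_{k+1:t})`,
where the last factor (the mixture over `C_{D−1}(k+1)`) is defined to be `1` when `t ≤ k`. -/
theorem ptw_kte_recursion {α : Type*} [Fintype α] [DecidableEq α]
    (D : ℕ) (hD : 1 ≤ D) (t : ℕ) (ht1 : 1 ≤ t) (ht2 : t ≤ 2 ^ D)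
    (e : ℕ → Bool) (a : ℕ → α) :
    ptwKTE D 1 e a t =
      1 / 2 * kteSeg e a 1 t +
      1 / 2 * ptwKTE (D - 1) 1 e a (min t (2 ^ (D - 1))) *
        (if t ≤ 2 ^ (D - 1) then 1 else ptwKTE (D - 1) (2 ^ (D - 1) + 1) e a t) := by
  obtain ⟨D', rfl⟩ : ∃ D', D = D' + 1 := ⟨D - 1, by omega⟩
  simp only [Nat.add_sub_cancel]
  have h1d : (1:ℕ) ≤ 2 ^ D' := Nat.one_le_two_pow
  have hp : (2:ℕ) ^ (D' + 1) = 2 ^ D' + 2 ^ D' := by ring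
  have hmin : min (1 + 2 ^ (D' + 1) - 1) t = t := by omega
  have E1 : ptwKTE D' 1 e a (min t (2 ^ D')) = ptwKTE D' 1 e a t := by
    by_cases h : t ≤ 2 ^ D'
    · rw [min_eq_left h]
    · rw [min_eq_right (by omega)]
      exact (ptw_clip D' 1 t (2 ^ D') e a (by omega) (by omega)).symm
  have E2 : (if t ≤ 2 ^ D' then (1:ℝ) else ptwKTE D' (2 ^ D' + 1) e a t) =
      ptwKTE D' (2 ^ D' + 1) e a t := by
    by_cases h : t ≤ 2 ^ D'
    · rw [if_pos h, ptw_empty D' (2 ^ D' + 1) t e a (by omega)]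
    · rw [if_neg h]
  rw [ptw_succ D' 1 e a t ht1, hmin, show 1 + 2 ^ D' = 2 ^ D' + 1 from Nat.add_comm _ _,
    ← E1, E2]
end

section
/- (Beta function lower bound) For all real a, b ≥ 1, the Beta function satisfies B(a+1, b+1) ≥ [1.6·√(ab) / (a+b)^{3/2}] · e^{−(a+b)·H(θ̂)}, where θ̂ := a/(a+b) and H(p) := −p·ln p − (1−p)·ln(1−p) is the binary entropy. -/
open Real Filter Stirling Topology

/-- Stirling-normalized Gamma: `G(x) = Γ(x+1) eˣ / x^(x+1/2)`. -/
noncomputable def Gfun (x : ℝ) : ℝ := Real.Gamma (x+1) * Real.exp x / x ^ (x + 1/2 : ℝ)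

lemma Gfun_pos {x : ℝ} (hx : 0 < x) : 0 < Gfun x := by
  unfold Gfun
  have h1 : 0 < Real.Gamma (x+1) := Real.Gamma_pos_of_pos (by linarith)
  positivity

-- log(1+u) ≥ u/(1+u) for u ≥ 0
lemma log_ge_self_div (u : ℝ) (hu : 0 ≤ u) : u / (1+u) ≤ Real.log (1+u) := by
  have h1 : (0:ℝ) < 1 + u := by linarith
  have := Real.log_le_sub_one_of_pos (x := (1+u)⁻¹) (by positivity)
  rw [Real.log_inv] at this
  have h2 : (1+u)⁻¹ - 1 = -(u/(1+u)) := by field_simp; ring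
  rw [h2] at this
  linarith

-- (2+u) log(1+u) ≥ 2u for u ≥ 0
lemma key_log {u : ℝ} (hu : 0 ≤ u) : 2*u ≤ (2+u) * Real.log (1+u) := by
  set F : ℝ → ℝ := fun u => (2+u) * Real.log (1+u) - 2*u with hF
  have hmono : MonotoneOn F (Set.Ici 0) := by
    apply monotoneOn_of_deriv_nonneg (convex_Ici 0)
    · apply ContinuousOn.sub
      · apply ContinuousOn.mul (by fun_prop)
        apply ContinuousOn.log (by fun_prop)
        intro x hx; simp only [Set.mem_Ici] at hx; positivity
      · fun_prop
    · intro x hx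
      rw [interior_Ici] at hx
      simp only [Set.mem_Ioi] at hx
      have h1 : (0:ℝ) < 1 + x := by linarith
      apply DifferentiableAt.differentiableWithinAt
      apply DifferentiableAt.sub
      · exact (differentiableAt_id.const_add 2).mul ((differentiableAt_id.const_add 1).log (by simpa using h1.ne'))
      · fun_prop
    · intro x hx
      rw [interior_Ici] at hx
      simp only [Set.mem_Ioi] at hx
      have h1 : (0:ℝ) < 1 + x := by linarith
      have hd : HasDerivAt F (Real.log (1+x) + (2+x) * (1/(1+x)) - 2) x := by
        have hlog : HasDerivAt (fun u : ℝ => Real.log (1+u)) (1/(1+x)) x := by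
          have := ((hasDerivAt_id x).const_add 1).log (by simpa using h1.ne')
          simpa using this
        have hmul : HasDerivAt (fun u : ℝ => (2+u) * Real.log (1+u))
            (1 * Real.log (1+x) + (2+x) * (1/(1+x))) x :=
          ((hasDerivAt_id x).const_add 2).mul hlog
        have h2u : HasDerivAt (fun u : ℝ => 2*u) 2 x := by
          simpa using (hasDerivAt_id x).const_mul (2:ℝ)
        have hs := hmul.sub h2u
        exact hs.congr_deriv (by ring)
      rw [hd.deriv]
      have := log_ge_self_div x (le_of_lt hx)
      have h2 : x/(1+x) + (2+x) * (1/(1+x)) - 2 = 0 := by field_simp; ring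
      nlinarith
  have h0 : F 0 = 0 := by simp [hF]
  have := hmono (Set.mem_Ici.2 le_rfl) (Set.mem_Ici.2 hu) hu
  rw [h0] at this
  simpa [hF] using this

lemma Gfun_succ_le {x : ℝ} (hx : 0 < x) : Gfun (x+1) ≤ Gfun x := by
  have hx1 : (0:ℝ) < x + 1 := by linarith
  have hG : Real.Gamma (x+1+1) = (x+1) * Real.Gamma (x+1) := Real.Gamma_add_one hx1.ne'
  have hGpos : 0 < Real.Gamma (x+1) := Real.Gamma_pos_of_pos hx1
  -- (x+1)^(x+1+1/2) = (x+1)^(x+1/2) * (x+1)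
  have hsplit : (x+1) ^ (x+1+1/2 : ℝ) = (x+1) ^ (x+1/2 : ℝ) * (x+1) := by
    rw [show (x+1+1/2 : ℝ) = (x+1/2) + 1 by ring, Real.rpow_add hx1, Real.rpow_one]
  -- key: exp 1 * x^(x+1/2) ≤ (x+1)^(x+1/2)
  have hkey : Real.exp 1 * x ^ (x+1/2 : ℝ) ≤ (x+1) ^ (x+1/2 : ℝ) := by
    have h1 : (1:ℝ) ≤ (x+1/2) * Real.log ((x+1)/x) := by
      have h2 := key_log (u := 1/x) (by positivity)
      have h3 : (1:ℝ) + 1/x = (x+1)/x := by field_simp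
      rw [h3] at h2
      have h4 : (x+1/2) * Real.log ((x+1)/x) = (x/2) * ((2+1/x) * Real.log ((x+1)/x)) := by
        field_simp
      rw [h4]
      have h2' := mul_le_mul_of_nonneg_left h2 (by positivity : (0:ℝ) ≤ x/2)
      have h2'' : x/2 * (2 * (1/x)) = 1 := by field_simp
      linarith
    have h5 : ((x+1)/x) ^ (x+1/2 : ℝ) = Real.exp ((x+1/2) * Real.log ((x+1)/x)) := by
      rw [Real.rpow_def_of_pos (by positivity)]
      ring_nf
    have h6 : Real.exp 1 ≤ ((x+1)/x) ^ (x+1/2 : ℝ) := by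
      rw [h5]; exact Real.exp_le_exp.2 h1
    have h7 : ((x+1)/x) ^ (x+1/2 : ℝ) = (x+1) ^ (x+1/2 : ℝ) / x ^ (x+1/2 : ℝ) :=
      Real.div_rpow (by linarith) hx.le _
    rw [h7] at h6
    have hxp : 0 < x ^ (x+1/2 : ℝ) := Real.rpow_pos_of_pos hx _
    calc Real.exp 1 * x ^ (x+1/2:ℝ) ≤ ((x+1)^(x+1/2:ℝ) / x^(x+1/2:ℝ)) * x^(x+1/2:ℝ) := by
          exact mul_le_mul_of_nonneg_right h6 hxp.le
      _ = (x+1) ^ (x+1/2:ℝ) := by field_simp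
  -- assemble
  unfold Gfun
  rw [hG, hsplit]
  have hxp : 0 < x ^ (x+1/2 : ℝ) := Real.rpow_pos_of_pos hx _
  have hx1p : 0 < (x+1) ^ (x+1/2 : ℝ) := Real.rpow_pos_of_pos hx1 _
  rw [div_le_div_iff₀ (by positivity) (by positivity)]
  have hexp : Real.exp (x+1) = Real.exp x * Real.exp 1 := by rw [Real.exp_add]
  rw [hexp]
  calc (x+1) * Real.Gamma (x+1) * (Real.exp x * Real.exp 1) * x ^ (x+1/2:ℝ)
      = (Real.Gamma (x+1) * Real.exp x * (x+1)) * (Real.exp 1 * x ^ (x+1/2:ℝ)) := by ring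
    _ ≤ (Real.Gamma (x+1) * Real.exp x * (x+1)) * ((x+1) ^ (x+1/2:ℝ)) := by
        apply mul_le_mul_of_nonneg_left hkey; positivity
    _ = Real.Gamma (x+1) * Real.exp x * ((x+1) ^ (x+1/2:ℝ) * (x+1)) := by ring

lemma Gfun_add_nat_le {x : ℝ} (hx : 0 < x) (k : ℕ) : Gfun (x + k) ≤ Gfun x := by
  induction k with
  | zero => simp
  | succ m ih =>
    have h1 : x + (m+1 : ℕ) = (x + m) + 1 := by push_cast; ring
    rw [h1]
    exact le_trans (Gfun_succ_le (by positivity)) ih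

lemma log_three_halves_le : Real.log (3/2) ≤ 5/12 := by
  have h := (abs_le.1 (Real.abs_log_sub_add_sum_range_le (x := (-1/2 : ℝ))
    (abs_lt.2 ⟨by norm_num, by norm_num⟩) 8)).2
  have habs : |(1/2 : ℝ)| = 1/2 := abs_of_pos (by norm_num)
  norm_num [Finset.sum_range_succ, habs] at h
  linarith

-- chord bound for Gamma on [3,4]
lemma Gamma_chord {s : ℝ} (h3 : 3 ≤ s) (h4 : s ≤ 4) :
    Real.Gamma s ≤ 2 * (3:ℝ) ^ (s - 3 : ℝ) := by
  have hG3 : Real.Gamma 3 = 2 := by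
    rw [show (3:ℝ) = ((2:ℕ):ℝ) + 1 by norm_num, Real.Gamma_nat_eq_factorial]; norm_num
  have hG4 : Real.Gamma 4 = 6 := by
    rw [show (4:ℝ) = ((3:ℕ):ℝ) + 1 by norm_num, Real.Gamma_nat_eq_factorial]; norm_num [Nat.factorial]
  have hc := Real.convexOn_log_Gamma.2 (Set.mem_Ioi.2 (by norm_num : (0:ℝ) < 3))
    (Set.mem_Ioi.2 (by norm_num : (0:ℝ) < 4)) (by linarith : (0:ℝ) ≤ 4 - s)
    (by linarith : (0:ℝ) ≤ s - 3) (by ring)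
  have harg : (4 - s) • (3:ℝ) + (s - 3) • (4:ℝ) = s := by simp [smul_eq_mul]; ring
  rw [harg] at hc
  simp only [Function.comp_apply, smul_eq_mul, hG3, hG4] at hc
  have hpos : 0 < Real.Gamma s := Real.Gamma_pos_of_pos (by linarith)
  have h6 : Real.log 6 = Real.log 2 + Real.log 3 := by
    rw [show (6:ℝ) = 2*3 by norm_num, Real.log_mul (by norm_num) (by norm_num)]
  rw [h6] at hc
  have hc2 : Real.log (Real.Gamma s) ≤ Real.log 2 + (s-3) * Real.log 3 := by nlinarith
  calc Real.Gamma s = Real.exp (Real.log (Real.Gamma s)) := (Real.exp_log hpos).symm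
    _ ≤ Real.exp (Real.log 2 + (s-3) * Real.log 3) := Real.exp_le_exp.2 hc2
    _ = 2 * (3:ℝ) ^ (s - 3 : ℝ) := by
        rw [Real.exp_add, Real.exp_log (by norm_num), Real.rpow_def_of_pos (by norm_num : (0:ℝ) < 3)]
        ring_nf

-- the function D, antitone on [2,3]
noncomputable def Dfun (v : ℝ) : ℝ :=
  Real.log (1+1/v) + (v-2)*Real.log 3 + v - (v+1/2)*Real.log v

lemma Dfun_hasDeriv {v : ℝ} (hv : 0 < v) :
    HasDerivAt Dfun ((-1/v^2)/(1+1/v) + Real.log 3 + 1 - (Real.log v + (v+1/2) * (1/v))) v := by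
  have hne : v ≠ 0 := hv.ne'
  have h1 : (0:ℝ) < 1 + 1/v := by positivity
  have hlog1 : HasDerivAt (fun y : ℝ => Real.log (1+1/y)) ((-1/v^2)/(1+1/v)) v := by
    have hinner : HasDerivAt (fun y : ℝ => 1 + 1/y) (-1/v^2) v := by
      simpa using ((hasDerivAt_id v).inv hne).const_add 1
    exact hinner.log h1.ne'
  have h2 : HasDerivAt (fun y : ℝ => (y-2)*Real.log 3) (Real.log 3) v := by
    simpa using (((hasDerivAt_id v).sub_const 2).mul_const (Real.log 3))
  have h3 : HasDerivAt (fun y : ℝ => (y+1/2)*Real.log y)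
      (1 * Real.log v + (v+1/2) * (1/v)) v := by
    have := ((hasDerivAt_id v).add_const (1/2)).mul (Real.hasDerivAt_log hne)
    simp only [one_div] at this ⊢
    exact this
  have := ((hlog1.add h2).add (hasDerivAt_id v)).sub h3
  unfold Dfun
  exact this.congr_deriv (by ring)

lemma Dfun_antitone : AntitoneOn Dfun (Set.Icc (2:ℝ) 3) := by
  apply antitoneOn_of_deriv_nonpos (convex_Icc 2 3)
  · intro v hv
    have hv0 : (0:ℝ) < v := by have := hv.1; linarith
    exact (Dfun_hasDeriv hv0).continuousAt.continuousWithinAt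
  · intro v hv
    rw [interior_Icc] at hv
    have hv0 : (0:ℝ) < v := by have := hv.1; linarith
    exact (Dfun_hasDeriv hv0).differentiableAt.differentiableWithinAt
  · intro v hv
    rw [interior_Icc] at hv
    obtain ⟨hv2, hv3⟩ := hv
    have hv0 : (0:ℝ) < v := by linarith
    rw [(Dfun_hasDeriv hv0).deriv]
    -- show ≤ 0
    have hlogv : Real.log 2 - Real.log v ≤ 2/v - 1 := by
      have := Real.log_le_sub_one_of_pos (x := 2/v) (by positivity)
      rwa [Real.log_div (by norm_num) hv0.ne'] at this
    have hlog32 : Real.log 3 - Real.log 2 ≤ 5/12 := by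
      have := log_three_halves_le
      rwa [Real.log_div (by norm_num) (by norm_num)] at this
    have e1 : (-1/v^2)/(1+1/v) = -(1/(v^2+v)) := by
      rw [div_eq_iff (by positivity)]
      field_simp
    rw [e1]
    have hq : 5/12 - 1 + 2/v - 1/(v^2+v) - 1/(2*v) ≤ 0 := by
      have expand : 5/12 - 1 + 2/v - 1/(v^2+v) - 1/(2*v)
          = -(((v-2)*(7*v+3)) / (12*v*(v+1))) := by
        field_simp
        ring
      rw [expand, neg_nonpos]
      apply div_nonneg (by nlinarith) (by nlinarith)
    have : (v+1/2)*(1/v) = 1 + 1/(2*v) := by field_simp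
    rw [this]
    nlinarith [hlogv, hlog32, hq]

-- numeric endpoint inequality : log 1.6 + Dfun 2 ≤ log π
lemma endpoint_numeric : Real.log 1.6 + Dfun 2 ≤ Real.log π := by
  have hD2 : Dfun 2 = Real.log (3/2) + 2 - (5/2)*Real.log 2 := by
    unfold Dfun
    norm_num
  rw [hD2]
  have key : (1.6 * (3/2) : ℝ) * Real.exp 2 ≤ π * (4 * Real.sqrt 2) := by
    have hs2 : (1.4142135:ℝ) ≤ Real.sqrt 2 := by
      nlinarith [Real.sqrt_nonneg 2, Real.sq_sqrt (by norm_num : (0:ℝ) ≤ 2)]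
    have he : Real.exp 2 ≤ 7.38905610 := by
      rw [show (2:ℝ) = 1 + 1 by norm_num, Real.exp_add]
      have h := Real.exp_one_lt_d9
      have h0 := Real.exp_pos 1
      have := mul_lt_mul'' h h h0.le h0.le
      linarith
    have hpi := Real.pi_gt_d6
    nlinarith [Real.sqrt_nonneg 2]
  -- take logs
  have h1 : Real.log ((1.6 * (3/2)) * Real.exp 2) ≤ Real.log (π * (4 * Real.sqrt 2)) :=
    Real.log_le_log (by positivity) key
  rw [Real.log_mul (by norm_num) (Real.exp_ne_zero 2), Real.log_exp,
      Real.log_mul (by norm_num) (by norm_num),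
      Real.log_mul Real.pi_ne_zero (by positivity),
      Real.log_mul (by norm_num) (by positivity : (0:ℝ) < Real.sqrt 2).ne',
      Real.log_sqrt (by norm_num)] at h1
  have h4 : Real.log 4 = 2 * Real.log 2 := by
    rw [show (4:ℝ) = 2^2 by norm_num, Real.log_pow]; push_cast; ring
  rw [h4] at h1
  linarith

-- star inequality
lemma star {v : ℝ} (h2 : 2 ≤ v) (h3 : v ≤ 3) :
    1.6*(1+1/v) * (2 * (3:ℝ)^(v-2:ℝ) * Real.exp v) ≤ 2*π*v^(v+1/2:ℝ) := by
  have hv0 : (0:ℝ) < v := by linarith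
  have hL : (0:ℝ) < 1.6*(1+1/v) * (2 * (3:ℝ)^(v-2:ℝ) * Real.exp v) := by positivity
  have hR : (0:ℝ) < 2*π*v^(v+1/2:ℝ) := by
    have := Real.pi_pos; positivity
  rw [← Real.log_le_log_iff hL hR]
  rw [Real.log_mul (by positivity) (by positivity), Real.log_mul (by norm_num) (by positivity),
      Real.log_mul (by positivity) (Real.exp_ne_zero v), Real.log_mul (by norm_num) (by positivity),
      Real.log_exp, Real.log_rpow (by norm_num : (0:ℝ) < 3),
      Real.log_mul (by positivity) (by positivity : (0:ℝ) < v^(v+1/2:ℝ)).ne',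
      Real.log_mul (by norm_num) Real.pi_ne_zero, Real.log_rpow hv0]
  have hmono := Dfun_antitone (Set.mem_Icc.2 ⟨le_refl 2, by norm_num⟩)
    (Set.mem_Icc.2 ⟨h2, h3⟩) h2
  have hnum := endpoint_numeric
  unfold Dfun at hmono hnum
  nlinarith [hmono, hnum]

lemma Gamma_prod {x : ℝ} (hx : 0 < x) (k : ℕ) :
    Real.Gamma (x + k + 1) = Real.Gamma x * ∏ j ∈ Finset.range (k+1), (x + j) := by
  induction k with
  | zero => simp [Real.Gamma_add_one hx.ne', mul_comm]
  | succ m ih =>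
    have h2 : (0:ℝ) < x + m + 1 := by positivity
    calc Real.Gamma (x + (m+1:ℕ) + 1) = Real.Gamma ((x + m + 1) + 1) := by push_cast; ring_nf
      _ = (x + m + 1) * Real.Gamma (x + m + 1) := Real.Gamma_add_one h2.ne'
      _ = (x + m + 1) * (Real.Gamma x * ∏ j ∈ Finset.range (m+1), (x + j)) := by rw [ih]
      _ = Real.Gamma x * ∏ j ∈ Finset.range (m+1+1), (x + j) := by
          conv_rhs => rw [Finset.prod_range_succ]
          push_cast
          ring

lemma GammaSeq_eq {x : ℝ} (hx : 0 < x) (k : ℕ) :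
    Real.GammaSeq x k = (k:ℝ)^(x:ℝ) * (Nat.factorial k) * Real.Gamma x / Real.Gamma (x + k + 1) := by
  rw [Real.GammaSeq, Gamma_prod hx k]
  have hG : Real.Gamma x ≠ 0 := (Real.Gamma_pos_of_pos hx).ne'
  have hprod : (0:ℝ) < ∏ j ∈ Finset.range (k+1), (x + j) := by
    apply Finset.prod_pos; intro j _; positivity
  field_simp

lemma Gfun_eq {x : ℝ} (hx : 0 < x) {k : ℕ} (hk : 1 ≤ k) :
    Gfun (x + k) = (Real.sqrt 2 * stirlingSeq k) * (Real.Gamma x / Real.GammaSeq x k) *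
      (Real.exp x / (1 + x/k) ^ (x + k + 1/2 : ℝ)) := by
  have hk0 : (0:ℝ) < k := by exact_mod_cast hk
  have hxk : (0:ℝ) < x + k := by positivity
  have h1 : (0:ℝ) < 1 + x/k := by positivity
  have hG : (0:ℝ) < Real.Gamma x := Real.Gamma_pos_of_pos hx
  have hfac : (0:ℝ) < (Nat.factorial k : ℝ) := by positivity
  -- Gamma x / GammaSeq x k = Gamma (x+k+1) / (k^x * k!)
  have hseq : Real.Gamma x / Real.GammaSeq x k
      = Real.Gamma (x + k + 1) / ((k:ℝ)^(x:ℝ) * (Nat.factorial k)) := by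
    rw [GammaSeq_eq hx k]
    have hGxk : (0:ℝ) < Real.Gamma (x + k + 1) := Real.Gamma_pos_of_pos (by positivity)
    have hkx : (0:ℝ) < (k:ℝ)^(x:ℝ) := Real.rpow_pos_of_pos hk0 _
    field_simp
  rw [hseq]
  -- stirlingSeq k = k! / (sqrt (2k) * (k / e)^k)
  rw [stirlingSeq]
  unfold Gfun
  -- goal: Gamma(x+k+1) * exp (x+k) / (x+k)^(x+k+1/2) = ...
  have hsqrt2k : Real.sqrt (2 * k) = Real.sqrt 2 * Real.sqrt k := Real.sqrt_mul (by norm_num) _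
  have hke : ((k:ℝ) / Real.exp 1) ^ k = ((k:ℝ)^(k:ℕ)) / Real.exp k := by
    rw [div_pow, ← Real.exp_one_rpow (k:ℝ), Real.rpow_natCast]
  have e1 : x + (k:ℝ) = k * (1 + x/k) := by field_simp; ring
  have e2 : (x + (k:ℝ)) ^ (x+k+1/2:ℝ) = (k:ℝ)^(x+k+1/2:ℝ) * (1+x/k)^(x+k+1/2:ℝ) := by
    rw [e1, Real.mul_rpow hk0.le h1.le]
  have e3 : (k:ℝ)^(x+k+1/2:ℝ) = (k:ℝ)^(x:ℝ) * ((k:ℝ)^(k:ℕ)) * Real.sqrt k := by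
    rw [Real.rpow_add hk0, Real.rpow_add hk0, Real.rpow_natCast, Real.sqrt_eq_rpow]
  rw [Real.exp_add, e2, e3, hke, hsqrt2k]
  have p1 : (0:ℝ) < (1+x/k)^(x+k+1/2:ℝ) := Real.rpow_pos_of_pos h1 _
  have p2 : (0:ℝ) < (k:ℝ)^(x:ℝ) := Real.rpow_pos_of_pos hk0 _
  have p3 : (0:ℝ) < ((k:ℝ):ℝ)^(k:ℕ) := by positivity
  have p4 : (0:ℝ) < Real.sqrt k := Real.sqrt_pos.2 hk0
  have p5 : (0:ℝ) < Real.sqrt 2 := by positivity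
  field_simp

lemma Gfun_tendsto {x : ℝ} (hx : 0 < x) :
    Tendsto (fun k : ℕ => Gfun (x + k)) atTop (𝓝 (Real.sqrt (2*Real.pi))) := by
  have hG : (0:ℝ) < Real.Gamma x := Real.Gamma_pos_of_pos hx
  -- limit of each factor
  have t1 : Tendsto (fun k : ℕ => Real.sqrt 2 * stirlingSeq k) atTop
      (𝓝 (Real.sqrt 2 * Real.sqrt Real.pi)) :=
    Stirling.tendsto_stirlingSeq_sqrt_pi.const_mul _
  have t2 : Tendsto (fun k : ℕ => Real.Gamma x / Real.GammaSeq x k) atTop (𝓝 1) := by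
    have := (tendsto_const_nhds (x := Real.Gamma x) (f := atTop (α := ℕ))).div
      (Real.GammaSeq_tendsto_Gamma x) hG.ne'
    rw [div_self hG.ne'] at this
    exact this
  have tb : Tendsto (fun k : ℕ => 1 + x/(k:ℝ)) atTop (𝓝 1) := by
    have := (tendsto_const_div_atTop_nhds_zero_nat x).const_add (1:ℝ)
    simpa using this
  have t3a : Tendsto (fun k : ℕ => (1 + x/(k:ℝ)) ^ ((k:ℕ):ℝ)) atTop (𝓝 (Real.exp x)) := by
    have h := (tendsto_one_add_div_rpow_exp x).comp
      (tendsto_natCast_atTop_atTop (R := ℝ))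
    exact h
  have t3b : Tendsto (fun k : ℕ => (1 + x/(k:ℝ)) ^ (x + 1/2 : ℝ)) atTop (𝓝 1) := by
    have := tb.rpow_const (p := x + 1/2) (Or.inl one_ne_zero)
    simpa using this
  have t3 : Tendsto (fun k : ℕ => (1 + x/(k:ℝ)) ^ ((k:ℝ)) * (1 + x/(k:ℝ)) ^ (x + 1/2 : ℝ))
      atTop (𝓝 (Real.exp x)) := by
    have := t3a.mul t3b
    simpa using this
  have t4 : Tendsto (fun k : ℕ => Real.exp x / ((1 + x/(k:ℝ)) ^ ((k:ℝ)) * (1 + x/(k:ℝ)) ^ (x + 1/2 : ℝ)))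
      atTop (𝓝 1) := by
    have := (tendsto_const_nhds (x := Real.exp x) (f := atTop (α := ℕ))).div t3 (Real.exp_ne_zero x)
    rw [div_self (Real.exp_ne_zero x)] at this
    exact this
  have tall := (t1.mul t2).mul t4
  rw [show Real.sqrt 2 * Real.sqrt Real.pi * 1 * 1 = Real.sqrt (2*Real.pi) by
    rw [Real.sqrt_mul (by norm_num : (0:ℝ) ≤ 2)]; ring] at tall
  apply tall.congr'
  filter_upwards [eventually_ge_atTop 1] with k hk
  have hk0 : (0:ℝ) < k := by exact_mod_cast hk
  have h1 : (0:ℝ) < 1 + x/k := by positivity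
  rw [Gfun_eq hx hk]
  congr 1
  rw [← Real.rpow_add h1 (k:ℝ) (x+1/2), show ((k:ℝ) + (x + 1/2)) = x + k + 1/2 by ring]

lemma sqrt_two_pi_le_Gfun {x : ℝ} (hx : 0 < x) : Real.sqrt (2*Real.pi) ≤ Gfun x :=
  le_of_tendsto (Gfun_tendsto hx) (Filter.Eventually.of_forall (fun k => Gfun_add_nat_le hx k))


lemma Gfun_upper {n : ℝ} (hn : 2 ≤ n) : 1.6 * (n+1) * Gfun n ≤ 2 * π * n := by
  have hn0 : (0:ℝ) < n := by linarith
  set k : ℕ := (⌊n⌋ - 2).toNat with hk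
  have hfl2 : (2:ℤ) ≤ ⌊n⌋ := by exact_mod_cast Int.le_floor.2 (by exact_mod_cast hn)
  have hkcast : (k:ℝ) = (⌊n⌋:ℝ) - 2 := by
    have h' : ((k:ℕ):ℤ) = ⌊n⌋ - 2 := by rw [hk]; exact Int.toNat_of_nonneg (by omega)
    exact_mod_cast h'
  set v : ℝ := n - k with hv
  have hv2 : 2 ≤ v := by
    have := Int.floor_le n
    rw [hv, hkcast]; linarith
  have hv3 : v ≤ 3 := by
    have := Int.lt_floor_add_one n
    rw [hv, hkcast]; linarith
  have hv0 : (0:ℝ) < v := by linarith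
  have hGn_le : Gfun n ≤ Gfun v := by
    have : v + k = n := by rw [hv]; ring
    calc Gfun n = Gfun (v + k) := by rw [this]
      _ ≤ Gfun v := Gfun_add_nat_le hv0 k
  -- chord bound on Gfun v
  have hvpow : (0:ℝ) < v ^ (v+1/2:ℝ) := Real.rpow_pos_of_pos hv0 _
  have hchord : Gfun v ≤ 2 * (3:ℝ)^(v-2:ℝ) * Real.exp v / v ^ (v+1/2:ℝ) := by
    unfold Gfun
    gcongr
    simpa [show v+1-3 = v-2 by ring] using Gamma_chord (by linarith : 3 ≤ v+1) (by linarith)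
  have hstar := star hv2 hv3
  have hfinal_v : 1.6 * (1+1/v) * Gfun v ≤ 2*π := by
    have h1 : 1.6 * (1+1/v) * Gfun v ≤ 1.6 * (1+1/v) * (2 * (3:ℝ)^(v-2:ℝ) * Real.exp v / v ^ (v+1/2:ℝ)) := by
      apply mul_le_mul_of_nonneg_left hchord (by positivity)
    apply h1.trans
    rw [show 1.6*(1+1/v)*(2*(3:ℝ)^(v-2:ℝ)*Real.exp v/v^(v+1/2:ℝ))
        = (1.6*(1+1/v)*(2*(3:ℝ)^(v-2:ℝ)*Real.exp v))/v^(v+1/2:ℝ) from by ring,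
      div_le_iff₀ hvpow]
    linarith [hstar]
  -- conclude
  have hGv_pos := Gfun_pos hv0
  have hGn_pos := Gfun_pos hn0
  have hmono : 1.6 * (1+1/n) * Gfun n ≤ 1.6 * (1+1/v) * Gfun v := by
    apply mul_le_mul ?_ hGn_le hGn_pos.le (by positivity)
    have hvn : v ≤ n := by
      have : (0:ℝ) ≤ (k:ℝ) := Nat.cast_nonneg k
      rw [hv]; linarith
    have : 1/n ≤ 1/v := one_div_le_one_div_of_le hv0 hvn
    linarith
  have heq : 1.6 * (n+1) * Gfun n = n * (1.6 * (1+1/n) * Gfun n) := by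
    field_simp
  rw [heq]
  calc n * (1.6 * (1+1/n) * Gfun n) ≤ n * (2*π) := by
        apply mul_le_mul_of_nonneg_left (hmono.trans hfinal_v) hn0.le
    _ = 2*π*n := by ring

/-- Binary entropy `H(p) := −p·ln p − (1−p)·ln(1−p)`. -/
noncomputable def entBin (p : ℝ) : ℝ := -p * Real.log p - (1 - p) * Real.log (1 - p)

/-- **Beta function lower bound.** For all real `a, b ≥ 1`,
`B(a+1, b+1) ≥ [1.6·√(ab)/(a+b)^{3/2}]·e^{−(a+b)·H(θ̂)}`, where `θ̂ := a/(a+b)`. -/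
theorem beta_fn_lower_bound (a b : ℝ) (ha : 1 ≤ a) (hb : 1 ≤ b) :
    betaFn (a + 1) (b + 1) ≥
      1.6 * Real.sqrt (a * b) / (a + b) ^ ((3 : ℝ) / 2) *
        Real.exp (-(a + b) * entBin (a / (a + b))) := by
  have ha0 : (0:ℝ) < a := by linarith
  have hb0 : (0:ℝ) < b := by linarith
  set n : ℝ := a + b with hn
  have hn0 : (0:ℝ) < n := by positivity
  have hn2 : (2:ℝ) ≤ n := by rw [hn]; linarith
  -- abbreviations
  set A : ℝ := a ^ (a + 1/2 : ℝ) with hA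
  set B : ℝ := b ^ (b + 1/2 : ℝ) with hB
  set N : ℝ := n ^ (n + 1/2 : ℝ) with hN
  have hApos : 0 < A := Real.rpow_pos_of_pos ha0 _
  have hBpos : 0 < B := Real.rpow_pos_of_pos hb0 _
  have hNpos : 0 < N := Real.rpow_pos_of_pos hn0 _
  have hGa := Gfun_pos ha0
  have hGb := Gfun_pos hb0
  have hGn := Gfun_pos hn0
  -- entropy identity
  have hent : Real.exp (-(a + b) * entBin (a / (a + b))) = (a/n)^(a:ℝ) * (b/n)^(b:ℝ) := by
    have h1p : 1 - a/n = b/n := by field_simp; ring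
    have hna : n * (a/n) = a := by field_simp
    have hnb : n * (b/n) = b := by field_simp
    rw [entBin, h1p]
    have harg : -(a+b) * (-(a/n) * Real.log (a/n) - b/n * Real.log (b/n))
        = a * Real.log (a/n) + b * Real.log (b/n) := by
      rw [← hn]
      field_simp
      ring
    rw [harg, Real.exp_add]
    rw [Real.rpow_def_of_pos (by positivity : (0:ℝ) < a/n),
        Real.rpow_def_of_pos (by positivity : (0:ℝ) < b/n)]
    ring_nf
  -- RHS equals 1.6 * (A*B) / (N*n)
  have hRHS : 1.6 * Real.sqrt (a * b) / (a + b) ^ ((3 : ℝ) / 2) *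
        Real.exp (-(a + b) * entBin (a / (a + b))) = 1.6 * (A*B) / (N*n) := by
    rw [hent]
    rw [Real.sqrt_mul ha0.le, Real.sqrt_eq_rpow, Real.sqrt_eq_rpow,
        Real.div_rpow ha0.le hn0.le, Real.div_rpow hb0.le hn0.le]
    rw [← hn]
    have hAeq : A = a ^ (a:ℝ) * a ^ ((1:ℝ)/2) := by
      rw [hA, ← Real.rpow_add ha0]
    have hBeq : B = b ^ (b:ℝ) * b ^ ((1:ℝ)/2) := by
      rw [hB, ← Real.rpow_add hb0]
    have hNeq : N * n = n ^ (a:ℝ) * n ^ (b:ℝ) * n ^ ((3:ℝ)/2) := by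
      have hcomb : n ^ (a:ℝ) * n ^ (b:ℝ) * n ^ ((3:ℝ)/2) = n ^ (a+b+(3:ℝ)/2) := by
        rw [← Real.rpow_add hn0, ← Real.rpow_add hn0]
      rw [hN, hcomb, show a+b+(3:ℝ)/2 = (n+1/2)+1 by rw [hn]; ring]
      rw [Real.rpow_add hn0 (n+1/2) 1, Real.rpow_one]
    rw [hAeq, hBeq, hNeq]
    have p1 : (0:ℝ) < n ^ (a:ℝ) := Real.rpow_pos_of_pos hn0 _
    have p2 : (0:ℝ) < n ^ (b:ℝ) := Real.rpow_pos_of_pos hn0 _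
    have p3 : (0:ℝ) < n ^ ((3:ℝ)/2) := Real.rpow_pos_of_pos hn0 _
    field_simp
  -- LHS equals G-expression
  have hGamma_a : Real.Gamma (a+1) = Gfun a * A / Real.exp a := by
    unfold Gfun; rw [← hA]; field_simp
  have hGamma_b : Real.Gamma (b+1) = Gfun b * B / Real.exp b := by
    unfold Gfun; rw [← hB]; field_simp
  have hGamma_n : Real.Gamma (n+1) = Gfun n * N / Real.exp n := by
    unfold Gfun; rw [← hN]; field_simp
  have hLHS : betaFn (a + 1) (b + 1) = (Gfun a * Gfun b * (A*B)) / ((n+1) * Gfun n * N) := by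
    rw [betaFn, show a+1+(b+1) = (n+1)+1 by rw [hn]; ring,
        Real.Gamma_add_one (by positivity : (0:ℝ) < n+1).ne', hGamma_a, hGamma_b, hGamma_n]
    have hexp : Real.exp n = Real.exp a * Real.exp b := by rw [hn, Real.exp_add]
    rw [hexp]
    have e1 := Real.exp_pos a
    have e2 := Real.exp_pos b
    field_simp
  rw [hLHS, hRHS, ge_iff_le, div_le_div_iff₀ (by positivity) (by positivity)]
  -- key inequality
  have hkey : 1.6 * ((n+1) * Gfun n) ≤ Gfun a * Gfun b * n := by
    have h2pi : 2 * π ≤ Gfun a * Gfun b := by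
      have := mul_le_mul (sqrt_two_pi_le_Gfun ha0) (sqrt_two_pi_le_Gfun hb0)
        (Real.sqrt_nonneg _) hGa.le
      rwa [Real.mul_self_sqrt (by positivity : (0:ℝ) ≤ 2*π)] at this
    calc 1.6 * ((n+1) * Gfun n) = 1.6 * (n+1) * Gfun n := by ring
      _ ≤ 2 * π * n := Gfun_upper hn2
      _ ≤ (Gfun a * Gfun b) * n := by
          apply mul_le_mul_of_nonneg_right h2pi hn0.le
  calc 1.6 * (A*B) * ((n+1) * Gfun n * N)
      = (1.6 * ((n+1) * Gfun n)) * (A*B*N) := by ring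
    _ ≤ (Gfun a * Gfun b * n) * (A*B*N) := by
        apply mul_le_mul_of_nonneg_right hkey (by positivity)
    _ = Gfun a * Gfun b * (A*B) * (N*n) := by ring
end

section
/- (Regularised incomplete Beta tail bound) For all real a, b ≥ 1 and all x with 0 < x ≤ a/(a+b), the regularised incomplete Beta function satisfies I_x(a+1, b+1) ≤ x · [(a+b)^{3/2} / (1.6·√(ab))] · e^{−(a+b)·KL(θ̂‖x)}, where θ̂ := a/(a+b) and KL(p‖q) := p·ln(p/q) + (1−p)·ln((1−p)/(1−q)) is the binary KL-divergence. -/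
/-- The regularised incomplete Beta function (cumulative Beta distribution)
`I_x(a,b) := B(x;a,b)/B(a,b)`, where `B(x;a,b) := ∫₀^x t^{a−1}(1−t)^{b−1} dt`. -/
noncomputable def regIncBeta (x a b : ℝ) : ℝ :=
  (∫ t in (0 : ℝ)..x, t ^ (a - 1) * (1 - t) ^ (b - 1)) / betaFn a b

/-- Binary KL-divergence `KL(p‖q) := p·ln(p/q) + (1−p)·ln((1−p)/(1−q))`. -/
noncomputable def klBin (p q : ℝ) : ℝ := p * Real.log (p / q) + (1 - p) * Real.log ((1 - p) / (1 - q))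

open Real Filter Topology

noncomputable def sc (x : ℝ) : ℝ := (x + 1/2) * Real.log (1 + 1/x) - 1

lemma sc_bounds {x : ℝ} (hx : 0 < x) : 0 ≤ sc x ∧ sc x ≤ 1/(12*x) - 1/(12*(x+1)) := by
  set u : ℝ := 1/(2*x+1) with hu
  have h2x : (0:ℝ) < 2*x+1 := by linarith
  have hu0 : 0 < u := by positivity
  have hu1 : u < 1 := by rw [hu, div_lt_one h2x]; linarith
  have hL : HasSum (fun k : ℕ => (x+1/2) * (2 * (1/(2*(k:ℝ)+1)) * u ^ (2*k+1)))
      ((x+1/2) * Real.log (1 + 1/x)) := by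
    have h := (Real.hasSum_log_one_add_inv hx).mul_left (x+1/2)
    rw [← one_div x] at h
    exact h
  have hg0 : (x+1/2) * (2 * (1/(2*((0:ℕ):ℝ)+1)) * u ^ (2*0+1)) = 1 := by
    simp only [Nat.cast_zero]
    rw [hu, pow_one]
    field_simp
    ring
  have htail : HasSum (fun k : ℕ => (x+1/2) * (2 * (1/(2*((k:ℝ)+1)+1)) * u ^ (2*(k+1)+1)))
      (sc x) := by
    have heq : sc x = ((x+1/2) * Real.log (1+1/x)) -
        ∑ i ∈ Finset.range 1, ((x+1/2) * (2 * (1/(2*(i:ℝ)+1)) * u ^ (2*i+1))) := by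
      rw [Finset.sum_range_one, hg0]; unfold sc; ring
    rw [heq]
    have h := (hasSum_nat_add_iff'
      (f := fun k : ℕ => (x+1/2) * (2 * (1/(2*(k:ℝ)+1)) * u ^ (2*k+1))) 1).2 hL
    have hfun : (fun n : ℕ => (x+1/2) * (2 * (1/(2*((n+1:ℕ):ℝ)+1)) * u ^ (2*(n+1)+1)))
        = (fun k : ℕ => (x+1/2) * (2 * (1/(2*((k:ℝ)+1)+1)) * u ^ (2*(k+1)+1))) := by
      funext n; push_cast; ring_nf
    rw [← hfun]
    exact h
  have hgeom : HasSum (fun k : ℕ => ((x+1/2) * (2/3) * u^3) * (u^2)^k)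
      (1/(12*x) - 1/(12*(x+1))) := by
    have h := (hasSum_geometric_of_lt_one (by positivity) (by nlinarith : u^2 < 1)).mul_left
      ((x+1/2) * (2/3) * u^3)
    suffices e : (1/(12*x) - 1/(12*(x+1)) : ℝ) = (x+1/2) * (2/3) * u^3 * (1 - u^2)⁻¹ by
      rw [e]; exact h
    have hval : (1:ℝ) - u^2 = 4*x*(x+1)/(2*x+1)^2 := by
      rw [hu]; field_simp; ring
    have hx1 : x + 1 ≠ 0 := by positivity
    rw [hval, hu]
    rw [show ((4*x*(x+1)/(2*x+1)^2)⁻¹ : ℝ) = (2*x+1)^2/(4*x*(x+1)) by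
      rw [inv_div]]
    field_simp
    ring
  constructor
  · refine hasSum_le (fun k => ?_) hasSum_zero htail
    have : (0:ℝ) ≤ u ^ (2*(k+1)+1) := by positivity
    have h1 : (0:ℝ) < 2*((k:ℝ)+1)+1 := by positivity
    positivity
  · refine hasSum_le (fun k => ?_) htail hgeom
    have hpow : u ^ (2*(k+1)+1) = u^3 * (u^2)^k := by
      rw [show 2*(k+1)+1 = 2*k+3 by ring, pow_add, pow_mul]; ring
    rw [hpow]
    have h1 : (1:ℝ)/(2*((k:ℝ)+1)+1) ≤ 1/3 := by
      apply div_le_div_of_nonneg_left (by norm_num) (by norm_num) (by push_cast; linarith [Nat.cast_nonneg (α := ℝ) k])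
    have hx2 : (0:ℝ) < x + 1/2 := by linarith
    have hup : (0:ℝ) ≤ u^3 * (u^2)^k := by positivity
    calc (x+1/2) * (2 * (1/(2*((k:ℝ)+1)+1)) * (u^3 * (u^2)^k))
        ≤ (x+1/2) * (2 * (1/3) * (u^3 * (u^2)^k)) := by
          apply mul_le_mul_of_nonneg_left _ hx2.le
          apply mul_le_mul_of_nonneg_right _ hup
          linarith
      _ = (x+1/2) * (2/3) * u^3 * (u^2)^k := by ring

noncomputable def sg (x : ℝ) : ℝ :=
  Real.log (Real.Gamma x) - (x - 1/2) * Real.log x + x - Real.log (2 * Real.pi) / 2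

lemma sg_sub {x : ℝ} (hx : 0 < x) : sg x - sg (x+1) = sc x := by
  have hΓ : Real.Gamma (x+1) = x * Real.Gamma x := Real.Gamma_add_one hx.ne'
  have hΓpos : 0 < Real.Gamma x := Real.Gamma_pos_of_pos hx
  have hlog : Real.log (Real.Gamma (x+1)) = Real.log x + Real.log (Real.Gamma x) := by
    rw [hΓ, Real.log_mul hx.ne' hΓpos.ne']
  have hlog2 : Real.log (1 + 1/x) = Real.log (x+1) - Real.log x := by
    rw [show (1 + 1/x : ℝ) = (x+1)/x by field_simp, Real.log_div (by positivity) hx.ne']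
  unfold sg sc
  rw [hlog, hlog2]
  ring

lemma sg_telescope {x : ℝ} (hx : 0 < x) (N : ℕ) :
    sg x - sg (x+N) = ∑ n ∈ Finset.range N, sc (x+n) := by
  induction N with
  | zero => simp
  | succ N ih =>
    rw [Finset.sum_range_succ, ← ih]
    have h := sg_sub (x := x + N) (by positivity)
    have hcast : x + ((N:ℝ)+1) = x + (N+1:ℕ) := by push_cast; ring
    rw [← hcast]
    ring_nf
    ring_nf at h ih ⊢
    linarith [h]

lemma sg_nat_eq (n : ℕ) (hn : 1 ≤ n) :
    sg ((n:ℝ)+1) = Real.log (Stirling.stirlingSeq n) - Real.log (Real.sqrt Real.pi) - sc n := by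
  have hn0 : (0:ℝ) < n := by exact_mod_cast hn
  have hfact : Real.Gamma ((n:ℝ)+1) = (n.factorial : ℝ) := Real.Gamma_nat_eq_factorial n
  rw [Stirling.log_stirlingSeq_formula]
  unfold sg sc
  rw [hfact]
  rw [Real.log_mul two_ne_zero hn0.ne', Real.log_div hn0.ne' (Real.exp_ne_zero 1),
      Real.log_exp, Real.log_sqrt Real.pi_pos.le,
      Real.log_mul two_ne_zero Real.pi_pos.ne',
      show Real.log (1 + 1/(n:ℝ)) = Real.log ((n:ℝ)+1) - Real.log n by
        rw [show (1 + 1/(n:ℝ)) = ((n:ℝ)+1)/n by field_simp, Real.log_div (by positivity) hn0.ne']]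
  ring

lemma tendsto_sc_nat : Tendsto (fun n : ℕ => sc n) atTop (𝓝 0) := by
  refine tendsto_of_tendsto_of_tendsto_of_le_of_le' tendsto_const_nhds
    tendsto_one_div_atTop_nhds_zero_nat ?_ ?_
  · filter_upwards [eventually_ge_atTop 1] with n hn
    exact (sc_bounds (by exact_mod_cast hn : (0:ℝ) < n)).1
  · filter_upwards [eventually_ge_atTop 1] with n hn
    have hn0 : (0:ℝ) < n := by exact_mod_cast hn
    have h := (sc_bounds hn0).2
    have h2 : (0:ℝ) < 12*((n:ℝ)+1) := by positivity
    have : 1/(12*(n:ℝ)) - 1/(12*((n:ℝ)+1)) ≤ 1/(n:ℝ) := by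
      have h3 : (0:ℝ) ≤ 1/(12*((n:ℝ)+1)) := by positivity
      have h4 : 1/(12*(n:ℝ)) ≤ 1/(n:ℝ) := by
        apply div_le_div_of_nonneg_left (by norm_num) hn0; linarith
      linarith
    linarith

lemma tendsto_sg_nat : Tendsto (fun n : ℕ => sg ((n:ℝ)+1)) atTop (𝓝 0) := by
  have hsq : Real.sqrt Real.pi ≠ 0 := by positivity
  have h1 : Tendsto (fun n : ℕ => Real.log (Stirling.stirlingSeq n)) atTop
      (𝓝 (Real.log (Real.sqrt Real.pi))) :=
    (Real.continuousAt_log hsq).tendsto.comp Stirling.tendsto_stirlingSeq_sqrt_pi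
  have h2 : Tendsto (fun n : ℕ => Real.log (Stirling.stirlingSeq n)
      - Real.log (Real.sqrt Real.pi) - sc n) atTop
      (𝓝 (Real.log (Real.sqrt Real.pi) - Real.log (Real.sqrt Real.pi) - 0)) :=
    (h1.sub tendsto_const_nhds).sub tendsto_sc_nat
  rw [sub_self, zero_sub, neg_zero] at h2
  apply h2.congr'
  filter_upwards [eventually_ge_atTop 1] with n hn
  exact (sg_nat_eq n hn).symm
lemma tendsto_aux (p q r : ℝ) :
    Tendsto (fun N : ℕ => ((N:ℝ)+p) * Real.log (((N:ℝ)+q)/((N:ℝ)+r))) atTop (𝓝 (q-r)) := by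
  have h2 : Tendsto (fun N : ℕ => (N:ℝ)+r) atTop atTop :=
    tendsto_atTop_add_const_right _ r tendsto_natCast_atTop_atTop
  have h3 : Tendsto (fun N : ℕ => ((N:ℝ)+r) * Real.log (1 + (q-r)/((N:ℝ)+r))) atTop
      (𝓝 (q-r)) := (Real.tendsto_mul_log_one_add_div_atTop (q-r)).comp h2
  have h5 : Tendsto (fun N : ℕ => (p-r)/((N:ℝ)+r)) atTop (𝓝 0) :=
    tendsto_const_nhds.div_atTop h2
  have h4 : Tendsto (fun N : ℕ => ((N:ℝ)+p)/((N:ℝ)+r)) atTop (𝓝 1) := by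
    have h6 := h5.const_add (1:ℝ)
    rw [add_zero] at h6
    apply h6.congr'
    filter_upwards [h2.eventually_gt_atTop 0] with N hN
    field_simp; ring
  have h7 := h4.mul h3
  rw [one_mul] at h7
  apply h7.congr'
  filter_upwards [h2.eventually_gt_atTop 0] with N hN
  have harg : 1 + (q-r)/((N:ℝ)+r) = ((N:ℝ)+q)/((N:ℝ)+r) := by field_simp; ring
  rw [harg]
  field_simp

lemma tendsto_sg_shift (m : ℕ) (hm : 1 ≤ m) :
    Tendsto (fun N : ℕ => sg ((N:ℝ) + m)) atTop (𝓝 0) := by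
  have h := tendsto_sg_nat.comp (tendsto_add_atTop_nat (m-1))
  apply h.congr
  intro N
  have : ((N + (m-1) : ℕ) : ℝ) + 1 = (N:ℝ) + m := by
    push_cast [Nat.cast_sub hm]
    ring
  rw [Function.comp_apply, this]

lemma tendsto_sg_add {x : ℝ} (hx : 1 ≤ x) :
    Tendsto (fun N : ℕ => sg (x + N)) atTop (𝓝 0) := by
  have hx0 : (0:ℝ) ≤ x := by linarith
  obtain ⟨m, t, hm1, ht0, ht1, hxmt⟩ :
      ∃ (m : ℕ) (t : ℝ), 1 ≤ m ∧ 0 ≤ t ∧ t < 1 ∧ x = m + t := by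
    refine ⟨⌊x⌋₊, x - ⌊x⌋₊, ?_, ?_, ?_, by ring⟩
    · exact Nat.le_floor (by exact_mod_cast hx)
    · have := Nat.floor_le hx0; linarith
    · have := Nat.lt_floor_add_one x; linarith
  have cvx := Real.convexOn_log_Gamma
  -- upper bound from convexity
  have upper : ∀ N : ℕ, sg (x + N) ≤ (1-t) * sg ((N:ℝ)+m) + t * sg ((N:ℝ)+(m+1))
      + (1-t)*(((N:ℝ)+((m:ℝ)-1/2)) * Real.log (((N:ℝ)+(m:ℝ))/((N:ℝ)+((m:ℝ)+t))))
      + t*(((N:ℝ)+((m:ℝ)+1/2)) * Real.log (((N:ℝ)+((m:ℝ)+1))/((N:ℝ)+((m:ℝ)+t)))) := by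
    intro N
    set n : ℝ := (N:ℝ) + m with hn
    have hm0 : (1:ℝ) ≤ (m:ℝ) := by exact_mod_cast hm1
    have hn0 : 0 < n := by positivity
    have hn10 : 0 < n + 1 := by positivity
    have hy : x + N = n + t := by rw [hxmt]; ring
    have hy0 : 0 < n + t := by linarith
    have hkey : Real.log (Real.Gamma (n+t)) ≤
        (1-t) * Real.log (Real.Gamma n) + t * Real.log (Real.Gamma (n+1)) := by
      have h := cvx.2 (Set.mem_Ioi.2 hn0) (Set.mem_Ioi.2 hn10)
        (by linarith : (0:ℝ) ≤ 1-t) ht0 (by ring)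
      simp only [Function.comp_apply, smul_eq_mul] at h
      have harg : (1-t) * n + t * (n+1) = n + t := by ring
      rw [harg] at h
      exact h
    rw [hy]
    have e1 : Real.log (((N:ℝ)+(m:ℝ))/((N:ℝ)+((m:ℝ)+t)))
        = Real.log n - Real.log (n+t) := by
      rw [show (N:ℝ)+((m:ℝ)+t) = n+t by rw [hn]; ring,
        Real.log_div hn0.ne' (by linarith)]
    have e2 : Real.log (((N:ℝ)+((m:ℝ)+1))/((N:ℝ)+((m:ℝ)+t)))
        = Real.log (n+1) - Real.log (n+t) := by
      rw [show (N:ℝ)+((m:ℝ)+1) = n+1 by rw [hn]; ring,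
        show (N:ℝ)+((m:ℝ)+t) = n+t by rw [hn]; ring,
        Real.log_div hn10.ne' (by linarith)]
    rw [e1, e2]
    have hsg1 : sg ((N:ℝ)+(m+1)) = sg (n+1) := by congr 1; rw [hn]; ring
    rw [hsg1]
    unfold sg
    rw [hn] at hkey ⊢
    nlinarith [hkey]
  -- lower bound from convexity
  have lower : ∀ N : ℕ, (2-t) * sg ((N:ℝ)+(m+1)) - (1-t) * sg ((N:ℝ)+(m+2))
      + (2-t)*(((N:ℝ)+((m:ℝ)+1/2)) * Real.log (((N:ℝ)+((m:ℝ)+1))/((N:ℝ)+((m:ℝ)+t))))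
      - (1-t)*(((N:ℝ)+((m:ℝ)+3/2)) * Real.log (((N:ℝ)+((m:ℝ)+2))/((N:ℝ)+((m:ℝ)+t))))
      ≤ sg (x + N) := by
    intro N
    set n : ℝ := (N:ℝ) + m with hn
    have hm0 : (1:ℝ) ≤ (m:ℝ) := by exact_mod_cast hm1
    have hn0 : 0 < n := by positivity
    have hn10 : 0 < n + 1 := by positivity
    have hn20 : 0 < n + 2 := by positivity
    have hy : x + N = n + t := by rw [hxmt]; ring
    have hy0 : 0 < n + t := by linarith
    have h2t : 0 < 2 - t := by linarith
    have hkey : (2-t) * Real.log (Real.Gamma (n+1)) - (1-t) * Real.log (Real.Gamma (n+2))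
        ≤ Real.log (Real.Gamma (n+t)) := by
      have h := cvx.2 (Set.mem_Ioi.2 hy0) (Set.mem_Ioi.2 hn20)
        (div_nonneg zero_le_one h2t.le)
        (div_nonneg (by linarith : (0:ℝ) ≤ 1-t) h2t.le) ?_
      · simp only [Function.comp_apply, smul_eq_mul] at h
        have harg : 1/(2-t) * (n+t) + (1-t)/(2-t) * (n+2) = n + 1 := by
          field_simp; ring
        rw [harg] at h
        have h2 := mul_le_mul_of_nonneg_left h h2t.le
        have hexp : (2-t) * (1/(2-t) * Real.log (Real.Gamma (n+t))
            + (1-t)/(2-t) * Real.log (Real.Gamma (n+2)))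
            = Real.log (Real.Gamma (n+t)) + (1-t) * Real.log (Real.Gamma (n+2)) := by
          field_simp
        rw [hexp] at h2
        linarith
      · field_simp
        ring
    rw [hy]
    have e2 : Real.log (((N:ℝ)+((m:ℝ)+1))/((N:ℝ)+((m:ℝ)+t)))
        = Real.log (n+1) - Real.log (n+t) := by
      rw [show (N:ℝ)+((m:ℝ)+1) = n+1 by rw [hn]; ring,
        show (N:ℝ)+((m:ℝ)+t) = n+t by rw [hn]; ring,
        Real.log_div hn10.ne' (by linarith)]
    have e3 : Real.log (((N:ℝ)+((m:ℝ)+2))/((N:ℝ)+((m:ℝ)+t)))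
        = Real.log (n+2) - Real.log (n+t) := by
      rw [show (N:ℝ)+((m:ℝ)+2) = n+2 by rw [hn]; ring,
        show (N:ℝ)+((m:ℝ)+t) = n+t by rw [hn]; ring,
        Real.log_div hn20.ne' (by linarith)]
    rw [e2, e3]
    have hsg1 : sg ((N:ℝ)+(m+1)) = sg (n+1) := by congr 1; rw [hn]; ring
    have hsg2 : sg ((N:ℝ)+(m+2)) = sg (n+2) := by congr 1; rw [hn]; ring
    rw [hsg1, hsg2]
    unfold sg
    rw [hn] at hkey ⊢
    nlinarith [hkey]
  -- limits of the bounding sequences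
  have hU : Tendsto (fun N : ℕ => (1-t) * sg ((N:ℝ)+m) + t * sg ((N:ℝ)+(m+1))
      + (1-t)*(((N:ℝ)+((m:ℝ)-1/2)) * Real.log (((N:ℝ)+(m:ℝ))/((N:ℝ)+((m:ℝ)+t))))
      + t*(((N:ℝ)+((m:ℝ)+1/2)) * Real.log (((N:ℝ)+((m:ℝ)+1))/((N:ℝ)+((m:ℝ)+t)))))
      atTop (𝓝 ((1-t) * 0 + t * 0 + (1-t)*((m:ℝ)-((m:ℝ)+t)) + t*(((m:ℝ)+1)-((m:ℝ)+t)))) := by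
    have hs1 : Tendsto (fun N : ℕ => sg ((N:ℝ)+(m+1))) atTop (𝓝 0) := by
      have := tendsto_sg_shift (m+1) (by omega)
      apply this.congr; intro N; push_cast; ring_nf
    exact ((((tendsto_sg_shift m hm1).const_mul (1-t)).add (hs1.const_mul t)).add
      ((tendsto_aux ((m:ℝ)-1/2) (m:ℝ) ((m:ℝ)+t)).const_mul (1-t))).add
      ((tendsto_aux ((m:ℝ)+1/2) ((m:ℝ)+1) ((m:ℝ)+t)).const_mul t)
  have hU0 : ((1-t) * 0 + t * 0 + (1-t)*((m:ℝ)-((m:ℝ)+t)) + t*(((m:ℝ)+1)-((m:ℝ)+t))) = 0 := by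
    ring
  rw [hU0] at hU
  have hL : Tendsto (fun N : ℕ => (2-t) * sg ((N:ℝ)+(m+1)) - (1-t) * sg ((N:ℝ)+(m+2))
      + (2-t)*(((N:ℝ)+((m:ℝ)+1/2)) * Real.log (((N:ℝ)+((m:ℝ)+1))/((N:ℝ)+((m:ℝ)+t))))
      - (1-t)*(((N:ℝ)+((m:ℝ)+3/2)) * Real.log (((N:ℝ)+((m:ℝ)+2))/((N:ℝ)+((m:ℝ)+t)))))
      atTop (𝓝 ((2-t) * 0 - (1-t) * 0 + (2-t)*(((m:ℝ)+1)-((m:ℝ)+t))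
        - (1-t)*(((m:ℝ)+2)-((m:ℝ)+t)))) := by
    have hs1 : Tendsto (fun N : ℕ => sg ((N:ℝ)+(m+1))) atTop (𝓝 0) := by
      have := tendsto_sg_shift (m+1) (by omega)
      apply this.congr; intro N; push_cast; ring_nf
    have hs2 : Tendsto (fun N : ℕ => sg ((N:ℝ)+(m+2))) atTop (𝓝 0) := by
      have := tendsto_sg_shift (m+2) (by omega)
      apply this.congr; intro N; push_cast; ring_nf
    exact ((((hs1.const_mul (2-t)).sub (hs2.const_mul (1-t))).add
      ((tendsto_aux ((m:ℝ)+1/2) ((m:ℝ)+1) ((m:ℝ)+t)).const_mul (2-t))).sub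
      ((tendsto_aux ((m:ℝ)+3/2) ((m:ℝ)+2) ((m:ℝ)+t)).const_mul (1-t)))
  have hL0 : ((2-t) * 0 - (1-t) * 0 + (2-t)*(((m:ℝ)+1)-((m:ℝ)+t))
        - (1-t)*(((m:ℝ)+2)-((m:ℝ)+t))) = 0 := by ring
  rw [hL0] at hL
  exact tendsto_of_tendsto_of_tendsto_of_le_of_le hL hU lower upper
lemma sg_bounds {x : ℝ} (hx : 1 ≤ x) : 0 ≤ sg x ∧ sg x ≤ 1/(12*x) := by
  have hx0 : (0:ℝ) < x := by linarith
  have hmono : ∀ N : ℕ, sg (x+N) ≤ sg x ∧ sg x ≤ sg (x+N) + 1/(12*x) := by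
    intro N
    have htel := sg_telescope hx0 N
    have hsum0 : 0 ≤ ∑ n ∈ Finset.range N, sc (x+n) :=
      Finset.sum_nonneg fun n _ => (sc_bounds (by positivity)).1
    have hsumle : ∑ n ∈ Finset.range N, sc (x+n) ≤ 1/(12*x) := by
      have h1 : ∀ n ∈ Finset.range N, sc (x+n) ≤
          (fun k : ℕ => 1/(12*(x+k))) n - (fun k : ℕ => 1/(12*(x+k))) (n+1) := by
        intro n _
        have h := (sc_bounds (show (0:ℝ) < x + n by positivity)).2
        simp only
        push_cast
        have he : 12*(x+((n:ℝ)+1)) = 12*(x+(n:ℝ))+12 := by ring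
        rw [he]
        have he2 : 12*(x+(n:ℝ)+1) = 12*(x+(n:ℝ))+12 := by ring
        rw [he2] at h
        linarith
      have h2 : (0:ℝ) ≤ 1/(12*(x+(N:ℕ))) := by positivity
      calc ∑ n ∈ Finset.range N, sc (x+n)
          ≤ ∑ n ∈ Finset.range N,
            ((fun k : ℕ => 1/(12*(x+k))) n - (fun k : ℕ => 1/(12*(x+k))) (n+1)) :=
            Finset.sum_le_sum h1
        _ = 1/(12*(x+(0:ℕ))) - 1/(12*(x+(N:ℕ))) := Finset.sum_range_sub' _ N
        _ ≤ 1/(12*x) := by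
            simp only [Nat.cast_zero, add_zero]
            linarith
    exact ⟨by linarith, by linarith⟩
  have hlim := tendsto_sg_add hx
  constructor
  · exact le_of_tendsto hlim (Eventually.of_forall fun N => (hmono N).1)
  · have h2 : sg x - 1/(12*x) ≤ 0 :=
      ge_of_tendsto hlim (Eventually.of_forall fun N => by linarith [(hmono N).2])
    linarith

lemma log_Gamma_ge {x : ℝ} (hx : 1 ≤ x) :
    Real.log (2*Real.pi) / 2 + (x - 1/2) * Real.log x - x ≤ Real.log (Real.Gamma x) := by
  have h := (sg_bounds hx).1
  unfold sg at h
  linarith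

lemma log_Gamma_le {x : ℝ} (hx : 1 ≤ x) :
    Real.log (Real.Gamma x) ≤
      Real.log (2*Real.pi) / 2 + (x - 1/2) * Real.log x - x + 1/(12*x) := by
  have h := (sg_bounds hx).2
  unfold sg at h
  linarith

lemma numeric_log {s : ℝ} (hs : 2 ≤ s) :
    Real.log 1.6 + Real.log (s+1) + 1/(12*s) ≤ Real.log (2*Real.pi) / 2 + Real.log s := by
  have hs0 : (0:ℝ) < s := by linarith
  -- exponential form
  have hexp : Real.exp (1/12:ℝ) ≤ 1.087 := by
    have h := Real.exp_bound' (x := 1/12) (by norm_num) (by norm_num) (n := 3) (by norm_num)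
    rw [Finset.sum_range_succ, Finset.sum_range_succ, Finset.sum_range_one] at h
    norm_num [Nat.factorial] at h
    linarith
  have h24 : Real.exp (1/24:ℝ) ^ 2 = Real.exp (1/12:ℝ) := by
    rw [sq, ← Real.exp_add]; norm_num
  have hpi : (3.141592:ℝ) < Real.pi := Real.pi_gt_d6
  have h4 : 2.4 * Real.exp (1/24:ℝ) ≤ Real.sqrt (2*Real.pi) := by
    rw [Real.le_sqrt (by positivity) (by positivity)]
    nlinarith [Real.exp_pos (1/24:ℝ)]
  have h1 : Real.exp (1/(12*s)) ≤ Real.exp (1/24:ℝ) := by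
    apply Real.exp_le_exp.2
    apply div_le_div_of_nonneg_left (by norm_num) (by norm_num)
    linarith
  have key : 1.6*(s+1)*Real.exp (1/(12*s)) ≤ Real.sqrt (2*Real.pi) * s := by
    have hE : (0:ℝ) < Real.exp (1/(12*s)) := Real.exp_pos _
    have h5 : 1.6*(s+1) ≤ 2.4*s := by nlinarith
    calc 1.6*(s+1)*Real.exp (1/(12*s)) ≤ 2.4*s*Real.exp (1/24:ℝ) := by
          apply mul_le_mul h5 h1 hE.le (by positivity)
      _ = (2.4 * Real.exp (1/24:ℝ)) * s := by ring
      _ ≤ Real.sqrt (2*Real.pi) * s := by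
          apply mul_le_mul_of_nonneg_right h4 hs0.le
  have hlog := Real.log_le_log (by positivity) key
  rw [Real.log_mul (by positivity) (Real.exp_ne_zero _), Real.log_mul (by norm_num)
    (by positivity), Real.log_exp, Real.log_mul (by positivity) hs0.ne',
    Real.log_sqrt (by positivity)] at hlog
  linarith
lemma rpow_prod_le {a b x t : ℝ} (ha : 1 ≤ a) (hb : 1 ≤ b) (ht0 : 0 ≤ t) (htx : t ≤ x)
    (hx0 : 0 < x) (hx1 : x < 1) (hxt : x ≤ a/(a+b)) :
    t ^ a * (1-t) ^ b ≤ x ^ a * (1-x) ^ b := by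
  have ha0 : (0:ℝ) < a := by linarith
  have hb0 : (0:ℝ) < b := by linarith
  have hs0 : (0:ℝ) < a + b := by linarith
  have h1x : (0:ℝ) < 1 - x := by linarith
  have h1t : (0:ℝ) < 1 - t := by linarith
  rcases eq_or_lt_of_le ht0 with h|h
  · rw [← h, Real.zero_rpow ha0.ne', zero_mul]
    positivity
  · have hax : b*x ≤ a*(1-x) := by
      have h1 := (le_div_iff₀ hs0).1 hxt
      nlinarith
    have hstepRaw : (b*(x-t))/(1-x) ≤ (a*(x-t))/x := by
      rw [div_le_div_iff₀ h1x hx0]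
      nlinarith [sub_nonneg.2 htx]
    have eA : (b*(x-t))/(1-x) = b*((1-t)/(1-x)) - b := by field_simp; ring
    have eB : (a*(x-t))/x = a - a*(t/x) := by field_simp
    have hstep2 : b*((1-t)/(1-x)) + a*(t/x) ≤ a + b := by linarith
    have k1 : a * Real.log t - a * Real.log x ≤ a*(t/x) - a := by
      have hl := Real.log_le_sub_one_of_pos (show (0:ℝ) < t/x by positivity)
      rw [Real.log_div h.ne' hx0.ne'] at hl
      nlinarith
    have k2 : b * Real.log (1-t) - b * Real.log (1-x) ≤ b*((1-t)/(1-x)) - b := by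
      have hl := Real.log_le_sub_one_of_pos (show (0:ℝ) < (1-t)/(1-x) by positivity)
      rw [Real.log_div h1t.ne' h1x.ne'] at hl
      nlinarith
    have key : Real.log t * a + Real.log (1-t) * b ≤ Real.log x * a + Real.log (1-x) * b := by
      nlinarith [k1, k2, hstep2]
    have et : t ^ a * (1-t) ^ b = Real.exp (Real.log t * a + Real.log (1-t) * b) := by
      rw [Real.rpow_def_of_pos h, Real.rpow_def_of_pos h1t, ← Real.exp_add]
    have ex : x ^ a * (1-x) ^ b = Real.exp (Real.log x * a + Real.log (1-x) * b) := by
      rw [Real.rpow_def_of_pos hx0, Real.rpow_def_of_pos h1x, ← Real.exp_add]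
    rw [et, ex]
    exact Real.exp_le_exp.2 key

lemma integral_bound {a b x : ℝ} (ha : 1 ≤ a) (hb : 1 ≤ b) (hx0 : 0 < x) (hx1 : x < 1)
    (hxt : x ≤ a/(a+b)) :
    (∫ t in (0:ℝ)..x, t ^ a * (1-t) ^ b) ≤ x * (x ^ a * (1-x) ^ b) := by
  have hcont : Continuous (fun t : ℝ => t ^ a * (1-t) ^ b) := by
    apply Continuous.mul
    · exact Real.continuous_rpow_const (by linarith)
    · exact (Real.continuous_rpow_const (by linarith : (0:ℝ) ≤ b)).comp
        (continuous_const.sub continuous_id)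
  have hint : IntervalIntegrable (fun t : ℝ => t ^ a * (1-t) ^ b) MeasureTheory.volume 0 x :=
    hcont.intervalIntegrable 0 x
  have hmono := intervalIntegral.integral_mono_on (μ := MeasureTheory.volume)
    (g := fun _ : ℝ => x ^ a * (1-x) ^ b) hx0.le hint intervalIntegrable_const
    (fun t ht => rpow_prod_le ha hb ht.1 ht.2 hx0 hx1 hxt)
  calc (∫ t in (0:ℝ)..x, t ^ a * (1-t) ^ b)
      ≤ ∫ _ in (0:ℝ)..x, (x ^ a * (1-x) ^ b) := hmono
    _ = x * (x ^ a * (1-x) ^ b) := by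
        rw [intervalIntegral.integral_const, smul_eq_mul, sub_zero]

/-- **Regularised incomplete Beta tail bound.** For all real `a, b ≥ 1` and `0 < x ≤ a/(a+b)`,
`I_x(a+1, b+1) ≤ x·[(a+b)^{3/2}/(1.6·√(ab))]·e^{−(a+b)·KL(θ̂‖x)}`, where `θ̂ := a/(a+b)`. -/
theorem reg_inc_beta_tail_bound (a b : ℝ) (ha : 1 ≤ a) (hb : 1 ≤ b)
    (x : ℝ) (hx0 : 0 < x) (hx : x ≤ a / (a + b)) :
    regIncBeta x (a + 1) (b + 1) ≤
      x * ((a + b) ^ ((3 : ℝ) / 2) / (1.6 * Real.sqrt (a * b))) *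
        Real.exp (-(a + b) * klBin (a / (a + b)) x) := by
  have ha0 : (0:ℝ) < a := by linarith
  have hb0 : (0:ℝ) < b := by linarith
  have hs0 : (0:ℝ) < a + b := by linarith
  have hs2 : (2:ℝ) ≤ a + b := by linarith
  have hθ1 : a/(a+b) < 1 := by rw [div_lt_one hs0]; linarith
  have hx1 : x < 1 := lt_of_le_of_lt hx hθ1
  have h1x : (0:ℝ) < 1 - x := by linarith
  have hΓa : 0 < Real.Gamma (a+1) := Real.Gamma_pos_of_pos (by linarith)
  have hΓb : 0 < Real.Gamma (b+1) := Real.Gamma_pos_of_pos (by linarith)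
  have hΓs : 0 < Real.Gamma ((a+1)+(b+1)) := Real.Gamma_pos_of_pos (by linarith)
  have hB : 0 < betaFn (a+1) (b+1) := by
    unfold betaFn; positivity
  -- Step 1 : bound the incomplete integral
  have hIB : regIncBeta x (a+1) (b+1) ≤ x * (x ^ a * (1-x) ^ b) / betaFn (a+1) (b+1) := by
    unfold regIncBeta
    have hi : (∫ t in (0:ℝ)..x, t ^ ((a+1)-1) * (1-t) ^ ((b+1)-1))
        ≤ x * (x ^ a * (1-x) ^ b) := by
      simp only [add_sub_cancel_right]
      exact integral_bound ha hb hx0 hx1 hx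
    exact (div_le_div_iff_of_pos_right hB).2 hi
  -- log-form bound on the Beta function
  have hGa1 : Real.log (Real.Gamma (a+1)) = Real.log a + Real.log (Real.Gamma a) := by
    rw [Real.Gamma_add_one ha0.ne', Real.log_mul ha0.ne' (Real.Gamma_pos_of_pos ha0).ne']
  have hGb1 : Real.log (Real.Gamma (b+1)) = Real.log b + Real.log (Real.Gamma b) := by
    rw [Real.Gamma_add_one hb0.ne', Real.log_mul hb0.ne' (Real.Gamma_pos_of_pos hb0).ne']
  have hGs2 : Real.log (Real.Gamma ((a+1)+(b+1))) =
      Real.log (a+b+1) + Real.log (a+b) + Real.log (Real.Gamma (a+b)) := by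
    rw [show (a+1)+(b+1) = (a+b+1)+1 by ring, Real.Gamma_add_one (by positivity : (a+b+1) ≠ 0),
      show (a+b+1 : ℝ) = (a+b)+1 by ring, Real.Gamma_add_one hs0.ne',
      Real.log_mul (by positivity : ((a+b:ℝ)+1) ≠ 0)
        (by positivity : ((a+b) * Real.Gamma (a+b)) ≠ 0),
      Real.log_mul hs0.ne' (Real.Gamma_pos_of_pos hs0).ne']
    ring
  have hBlog : Real.log (betaFn (a+1) (b+1)) = Real.log (Real.Gamma (a+1))
      + Real.log (Real.Gamma (b+1)) - Real.log (Real.Gamma ((a+1)+(b+1))) := by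
    unfold betaFn
    rw [Real.log_div (by positivity) hΓs.ne', Real.log_mul hΓa.ne' hΓb.ne']
  have key : Real.log 1.6 + (Real.log a + Real.log b)/2
      + (a*(Real.log a - Real.log (a+b)) + b*(Real.log b - Real.log (a+b)))
      ≤ Real.log (betaFn (a+1) (b+1)) + 3/2 * Real.log (a+b) := by
    have hn := numeric_log hs2
    have h1 := log_Gamma_ge ha
    have h2 := log_Gamma_ge hb
    have h3 := log_Gamma_le (show (1:ℝ) ≤ a+b by linarith)
    rw [hBlog, hGa1, hGb1, hGs2]
    nlinarith [hn, h1, h2, h3]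
  -- exponential forms
  have hE : Real.exp (-(a+b) * klBin (a/(a+b)) x) =
      Real.exp (Real.log x * a + Real.log (1-x) * b
        - (a*(Real.log a - Real.log (a+b)) + b*(Real.log b - Real.log (a+b)))) := by
    congr 1
    unfold klBin
    rw [show (1 - a/(a+b)) = b/(a+b) by field_simp; ring,
      Real.log_div (by positivity : (a/(a+b)) ≠ 0) hx0.ne',
      Real.log_div (by positivity : (b/(a+b)) ≠ 0) h1x.ne',
      Real.log_div ha0.ne' hs0.ne', Real.log_div hb0.ne' hs0.ne']
    field_simp
    ring
  have hsqrt : Real.sqrt (a*b) = Real.exp ((Real.log a + Real.log b)/2) := by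
    rw [← Real.exp_log (show 0 < Real.sqrt (a*b) by positivity),
      Real.log_sqrt (by positivity), Real.log_mul ha0.ne' hb0.ne']
  have hrs : (a+b) ^ ((3:ℝ)/2) = Real.exp (Real.log (a+b) * (3/2)) :=
    Real.rpow_def_of_pos hs0 _
  have h16 : (1.6:ℝ) = Real.exp (Real.log 1.6) := (Real.exp_log (by norm_num)).symm
  have hxP : x ^ a * (1-x) ^ b = Real.exp (Real.log x * a + Real.log (1-x) * b) := by
    rw [Real.rpow_def_of_pos hx0, Real.rpow_def_of_pos h1x, ← Real.exp_add]
  -- rewrite RHS as a single exponential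
  have hRHS : x * ((a + b) ^ ((3:ℝ)/2) / (1.6 * Real.sqrt (a*b)))
        * Real.exp (-(a+b) * klBin (a/(a+b)) x)
      = x * Real.exp (Real.log (a+b) * (3/2) - (Real.log 1.6 + (Real.log a + Real.log b)/2)
          + (Real.log x * a + Real.log (1-x) * b
            - (a*(Real.log a - Real.log (a+b)) + b*(Real.log b - Real.log (a+b))))) := by
    rw [hE, hrs, hsqrt]
    nth_rewrite 1 [h16]
    rw [← Real.exp_add, ← Real.exp_sub, mul_assoc, ← Real.exp_add]
  have hLHS : x * (x ^ a * (1-x) ^ b) / betaFn (a+1) (b+1)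
      = x * Real.exp (Real.log x * a + Real.log (1-x) * b
          - Real.log (betaFn (a+1) (b+1))) := by
    rw [hxP]
    nth_rewrite 1 [show betaFn (a+1) (b+1) = Real.exp (Real.log (betaFn (a+1) (b+1))) from
      (Real.exp_log hB).symm]
    rw [mul_div_assoc, ← Real.exp_sub]
  refine hIB.trans ?_
  rw [hLHS, hRHS]
  apply mul_le_mul_of_nonneg_left _ hx0.le
  apply Real.exp_le_exp.2
  linarith [key]
end

section
/- (Frequentist lower-tail bound for the smoothed empirical mean) Let θ ∈ [0,1], α, β > 0, and let X_1, …, X_n be independent Bernoulli(θ) random variables. Set n' := n + α + β and M := (X_1 + ⋯ + X_n + α)/n'. Then for every ε > 0 with n'·ε ≥ β, P(M ≤ θ − ε) ≤ e^{4εβ − 2β²/n'} · e^{−2n'ε²} ≤ e^{4εβ} · e^{−2n'ε²}. -/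
set_option maxHeartbeats 1000000


open MeasureTheory ProbabilityTheory

lemma bern_log_mgf_le (θ : ℝ) (h0 : 0 ≤ θ) (h1 : θ ≤ 1) (t : ℝ) :
    Real.log (1 - θ + θ * Real.exp t) ≤ θ * t + t ^ 2 / 8 := by
  have hg : ∀ s : ℝ, 0 < 1 - θ + θ * Real.exp s := by
    intro s
    rcases lt_or_eq_of_le h1 with h | h
    · have := mul_nonneg h0 (Real.exp_pos s).le; linarith
    · rw [h]; simpa using Real.exp_pos s
  set g : ℝ → ℝ := fun s => 1 - θ + θ * Real.exp s with hgdef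
  set f : ℝ → ℝ := fun s => θ * s + s ^ 2 / 8 - Real.log (g s) with hfdef
  set f' : ℝ → ℝ := fun s => θ + s / 4 - θ * Real.exp s / g s with hf'def
  have hgd : ∀ s, HasDerivAt g (θ * Real.exp s) s := fun s =>
    ((Real.hasDerivAt_exp s).const_mul θ).const_add (1 - θ)
  have hfd : ∀ s, HasDerivAt f (f' s) s := by
    intro s
    have h1' : HasDerivAt (fun s : ℝ => θ * s) θ s := by
      simpa using (hasDerivAt_id s).const_mul θ
    have h2' : HasDerivAt (fun s : ℝ => s ^ 2 / 8) (s / 4) s := by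
      have h := (hasDerivAt_pow 2 s).div_const 8
      convert h using 1
      · rfl
      · rfl
      · norm_num; ring
    have h3' : HasDerivAt (fun s => Real.log (g s)) (θ * Real.exp s / g s) s :=
      (hgd s).log (hg s).ne'
    exact (h1'.add h2').sub h3'
  have hf'd : ∀ s, HasDerivAt f' (1 / 4 - θ * (1 - θ) * Real.exp s / (g s) ^ 2) s := by
    intro s
    have h1' : HasDerivAt (fun s : ℝ => θ + s / 4) (1 / 4) s := by
      simpa using ((hasDerivAt_id s).div_const 4).const_add θ
    have h2' : HasDerivAt (fun s => θ * Real.exp s / g s)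
        ((θ * Real.exp s * g s - θ * Real.exp s * (θ * Real.exp s)) / (g s) ^ 2) s :=
      ((Real.hasDerivAt_exp s).const_mul θ).div (hgd s) (hg s).ne'
    have heq : (θ * Real.exp s * g s - θ * Real.exp s * (θ * Real.exp s)) / (g s) ^ 2
        = θ * (1 - θ) * Real.exp s / (g s) ^ 2 := by
      have hgs : g s = 1 - θ + θ * Real.exp s := rfl
      rw [hgs]; ring_nf
    rw [heq] at h2'
    exact h1'.sub h2'
  have hf''0 : ∀ s, 0 ≤ 1 / 4 - θ * (1 - θ) * Real.exp s / (g s) ^ 2 := by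
    intro s
    have hgs : (0:ℝ) < g s := hg s
    rw [sub_nonneg, div_le_iff₀ (by positivity : (0:ℝ) < (g s) ^ 2)]
    have hgs' : g s = 1 - θ + θ * Real.exp s := rfl
    nlinarith [sq_nonneg (1 - θ - θ * Real.exp s)]
  have hmono : Monotone f' :=
    monotone_of_deriv_nonneg (fun s => (hf'd s).differentiableAt)
      (fun s => by rw [(hf'd s).deriv]; exact hf''0 s)
  have hf'0 : f' 0 = 0 := by
    simp only [hf'def, hgdef]
    norm_num
  have hf0 : f 0 = 0 := by
    simp only [hfdef, hgdef]
    norm_num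
  have hdf : Differentiable ℝ f := fun s => (hfd s).differentiableAt
  have key : 0 ≤ f t := by
    rcases le_total 0 t with ht | ht
    · have hmonoI : MonotoneOn f (Set.Ici 0) := by
        refine monotoneOn_of_deriv_nonneg (convex_Ici 0) hdf.continuous.continuousOn
          hdf.differentiableOn ?_
        intro x hx
        rw [interior_Ici, Set.mem_Ioi] at hx
        rw [(hfd x).deriv]
        calc (0:ℝ) = f' 0 := hf'0.symm
          _ ≤ f' x := hmono hx.le
      calc (0:ℝ) = f 0 := hf0.symm
        _ ≤ f t := hmonoI Set.self_mem_Ici (Set.mem_Ici.mpr ht) ht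
    · have hantiI : AntitoneOn f (Set.Iic 0) := by
        refine antitoneOn_of_deriv_nonpos (convex_Iic 0) hdf.continuous.continuousOn
          hdf.differentiableOn ?_
        intro x hx
        rw [interior_Iic, Set.mem_Iio] at hx
        rw [(hfd x).deriv]
        calc f' x ≤ f' 0 := hmono hx.le
          _ = 0 := hf'0
      calc (0:ℝ) = f 0 := hf0.symm
        _ ≤ f t := hantiI (Set.mem_Iic.mpr ht) Set.self_mem_Iic ht
  have hfin : Real.log (g t) ≤ θ * t + t ^ 2 / 8 := by
    have := key
    simp only [hfdef] at this
    linarith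
  exact hfin

lemma bern_mgf_le (θ : ℝ) (h0 : 0 ≤ θ) (h1 : θ ≤ 1) (t : ℝ) :
    1 + θ * (Real.exp t - 1) ≤ Real.exp (θ * t + t ^ 2 / 8) := by
  have hg : 0 < 1 - θ + θ * Real.exp t := by
    rcases lt_or_eq_of_le h1 with h | h
    · have := mul_nonneg h0 (Real.exp_pos t).le; linarith
    · rw [h]; simpa using Real.exp_pos t
  have h := (Real.log_le_iff_le_exp hg).mp (bern_log_mgf_le θ h0 h1 t)
  linarith


/-- **Frequentist lower-tail bound for the smoothed empirical mean.** Let `θ ∈ [0,1]`,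
`α, β > 0`, and let `X_1, …, X_n` be independent Bernoulli(θ) random variables.  Set
`n' := n + α + β` and `M := (X_1 + ⋯ + X_n + α)/n'`.  Then for every `ε > 0` with `n'·ε ≥ β`,
`P(M ≤ θ − ε) ≤ e^{4εβ − 2β²/n'}·e^{−2n'ε²} ≤ e^{4εβ}·e^{−2n'ε²}`. -/
theorem smoothed_mean_lower_tail {Ω : Type*} [MeasurableSpace Ω]
    (P : Measure Ω) [IsProbabilityMeasure P]
    (θ : ℝ) (hθ : θ ∈ Set.Icc (0 : ℝ) 1) (α β : ℝ) (hα : 0 < α) (hβ : 0 < β)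
    (n : ℕ) (X : Fin n → Ω → ℝ)
    (hmeas : ∀ i, Measurable (X i))
    (hval : ∀ i ω, X i ω = 0 ∨ X i ω = 1)
    (hdist : ∀ i, P {ω | X i ω = 1} = ENNReal.ofReal θ)
    (hindep : iIndepFun X P)
    (ε : ℝ) (hε : 0 < ε) (hεβ : β ≤ ((n : ℝ) + α + β) * ε) :
    P {ω | (∑ i, X i ω + α) / ((n : ℝ) + α + β) ≤ θ - ε} ≤
        ENNReal.ofReal
          (Real.exp (4 * ε * β - 2 * β ^ 2 / ((n : ℝ) + α + β)) *
            Real.exp (-2 * ((n : ℝ) + α + β) * ε ^ 2)) ∧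
      Real.exp (4 * ε * β - 2 * β ^ 2 / ((n : ℝ) + α + β)) *
          Real.exp (-2 * ((n : ℝ) + α + β) * ε ^ 2) ≤
        Real.exp (4 * ε * β) * Real.exp (-2 * ((n : ℝ) + α + β) * ε ^ 2) := by
  obtain ⟨hθ0, hθ1⟩ := hθ
  set n' : ℝ := (n : ℝ) + α + β with hn'def
  have hn'pos : 0 < n' := by positivity
  constructor
  swap
  · apply mul_le_mul_of_nonneg_right _ (Real.exp_pos _).le
    apply Real.exp_le_exp.mpr
    have : 0 ≤ 2 * β ^ 2 / n' := by positivity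
    linarith
  set t₀ : ℝ := n' * ε + α - (α + β) * θ with ht₀def
  have ht₀ : n' * ε - β ≤ t₀ := by
    nlinarith [mul_nonneg (by positivity : (0:ℝ) ≤ α + β) (sub_nonneg.mpr hθ1)]
  have hεβ' : 0 ≤ n' * ε - β := by linarith [hεβ]
  have ht₀0 : 0 ≤ t₀ := le_trans hεβ' ht₀
  set t : ℝ := -4 * t₀ / n' with htdef
  have ht : t ≤ 0 := by
    apply div_nonpos_of_nonpos_of_nonneg _ hn'pos.le
    linarith
  set c : ℝ := n' * (θ - ε) - α with hcdef
  set S : Ω → ℝ := ∑ i, X i with hSdef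
  have hSapp : ∀ ω, S ω = ∑ i, X i ω := fun ω => by
    rw [hSdef]; exact Finset.sum_apply ω Finset.univ X
  have hset : {ω | (∑ i, X i ω + α) / n' ≤ θ - ε} = {ω | S ω ≤ c} := by
    ext ω
    simp only [Set.mem_setOf_eq, hSapp]
    rw [div_le_iff₀ hn'pos, hcdef]
    constructor <;> intro h <;> nlinarith
  have hint : ∀ i, Integrable (fun ω => Real.exp (t * X i ω)) P := by
    intro i
    refine Integrable.mono' (integrable_const (Real.exp |t|))
      (((hmeas i).const_mul t).exp.aestronglyMeasurable) (ae_of_all _ fun ω => ?_)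
    rw [Real.norm_eq_abs, Real.abs_exp]
    apply Real.exp_le_exp.mpr
    rcases hval i ω with h | h <;> rw [h]
    · simpa using abs_nonneg t
    · simpa using le_abs_self t
  have hmgf : ∀ i, mgf (X i) P t = 1 + θ * (Real.exp t - 1) := by
    intro i
    have hXint : Integrable (X i) P := by
      refine Integrable.mono' (integrable_const 1) (hmeas i).aestronglyMeasurable
        (ae_of_all _ fun ω => ?_)
      rcases hval i ω with h | h <;> simp [h]
    have hEX : ∫ ω, X i ω ∂P = θ := by
      have hind : (fun ω => X i ω) = fun ω => (X i ⁻¹' {1}).indicator (fun _ => (1:ℝ)) ω := by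
        funext ω
        rcases hval i ω with h | h
        · rw [Set.indicator_of_notMem (by simp [Set.mem_preimage, h]), h]
        · rw [Set.indicator_of_mem (by simp [Set.mem_preimage, h])]
          exact h
      rw [hind, integral_indicator_const (1:ℝ) ((hmeas i) (measurableSet_singleton 1))]
      have hpre : X i ⁻¹' {1} = {ω | X i ω = 1} := by ext ω; simp
      rw [hpre, measureReal_def, hdist i, smul_eq_mul, mul_one, ENNReal.toReal_ofReal hθ0]
    have hpt : (fun ω => Real.exp (t * X i ω)) = fun ω => 1 + (Real.exp t - 1) * X i ω := by
      funext ω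
      rcases hval i ω with h | h <;> rw [h]
      · simp
      · rw [mul_one, mul_one]; ring
    calc mgf (X i) P t = ∫ ω, Real.exp (t * X i ω) ∂P := rfl
      _ = ∫ ω, (1 + (Real.exp t - 1) * X i ω) ∂P := by rw [hpt]
      _ = 1 + (Real.exp t - 1) * θ := by
          rw [integral_add (integrable_const 1) (hXint.const_mul _), integral_const,
            integral_const_mul, hEX]
          simp
      _ = 1 + θ * (Real.exp t - 1) := by ring
  have hchern := measure_le_le_exp_mul_mgf (μ := P) (X := S) c ht
      (hindep.integrable_exp_mul_sum hmeas (fun i _ => hint i))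
  have hprod : mgf S P t ≤ Real.exp ((n:ℝ) * (θ * t + t ^ 2 / 8)) := by
    rw [hSdef, hindep.mgf_sum hmeas]
    calc ∏ i, mgf (X i) P t ≤ ∏ _i : Fin n, Real.exp (θ * t + t ^ 2 / 8) := by
          refine Finset.prod_le_prod (fun i _ => mgf_nonneg) (fun i _ => ?_)
          rw [hmgf i]
          exact bern_mgf_le θ hθ0 hθ1 t
      _ = Real.exp ((n:ℝ) * (θ * t + t ^ 2 / 8)) := by
          rw [Finset.prod_const, Finset.card_univ, Fintype.card_fin, ← Real.exp_nat_mul]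
  clear_value n' t₀ t c S
  have hexp : -t * c + (n:ℝ) * (θ * t + t ^ 2 / 8) ≤ -2 * (n' * ε - β) ^ 2 / n' := by
    have h1 : -t * c + (n:ℝ) * (θ * t + t ^ 2 / 8) = t * t₀ + (n:ℝ) * t ^ 2 / 8 := by
      rw [hcdef, ht₀def, hn'def]; ring
    have h2 : t * t₀ + (n:ℝ) * t ^ 2 / 8 = -4 * t₀ ^ 2 / n' + 2 * (n:ℝ) * t₀ ^ 2 / n' ^ 2 := by
      rw [htdef]; field_simp; ring
    have hnn' : (n:ℝ) ≤ n' := by rw [hn'def]; linarith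
    have h3 : 2 * (n:ℝ) * t₀ ^ 2 / n' ^ 2 ≤ 2 * t₀ ^ 2 / n' := by
      rw [div_le_div_iff₀ (by positivity) hn'pos]
      nlinarith [mul_nonneg (mul_nonneg (sq_nonneg t₀) hn'pos.le) (sub_nonneg.2 hnn')]
    have h4 : (n' * ε - β) ^ 2 ≤ t₀ ^ 2 := by nlinarith
    have h5 : -2 * t₀ ^ 2 / n' ≤ -2 * (n' * ε - β) ^ 2 / n' := by
      rw [div_le_div_iff₀ hn'pos hn'pos]
      nlinarith [mul_le_mul_of_nonneg_right h4 hn'pos.le]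
    have h6 : -4 * t₀ ^ 2 / n' + 2 * t₀ ^ 2 / n' = -2 * t₀ ^ 2 / n' := by ring
    rw [h1, h2]
    linarith
  have hr : Real.exp (4 * ε * β - 2 * β ^ 2 / n') * Real.exp (-2 * n' * ε ^ 2)
      = Real.exp (-2 * (n' * ε - β) ^ 2 / n') := by
    rw [← Real.exp_add]
    congr 1
    field_simp
    ring
  rw [hset, ENNReal.le_ofReal_iff_toReal_le (measure_ne_top P _) (by positivity)]
  calc (P {ω | S ω ≤ c}).toReal ≤ Real.exp (-t * c) * mgf S P t := hchern
    _ ≤ Real.exp (-t * c) * Real.exp ((n:ℝ) * (θ * t + t ^ 2 / 8)) :=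
        mul_le_mul_of_nonneg_left hprod (Real.exp_pos _).le
    _ = Real.exp (-t * c + (n:ℝ) * (θ * t + t ^ 2 / 8)) := (Real.exp_add _ _).symm
    _ ≤ Real.exp (-2 * (n' * ε - β) ^ 2 / n') := Real.exp_le_exp.mpr hexp
    _ = _ := hr.symm
end

section
/- (Bayesian Control Rule regret bound) Let ℳ be a finite set of environment measures over a finite percept set ℰ, each μ ∈ ℳ paired with a policy π_μ, where a policy assigns to each history h_{<t} a probability distribution π_μ(· | h_{<t}) over the finite action set 𝒜. Let w' be a prior on ℳ with w'(ρ) > 0 for all ρ, let w^ρ_{i−1} := w'(ρ)·ρ(e_{<i} || a_{<i}) / Σ_{ν∈ℳ} w'(ν)·ν(e_{<i} || a_{<i}) be the posterior weights, let ξ be the Bayes mixture environment ξ(e_i | h_{<i}a_i) := Σ_{ρ∈ℳ} w^ρ_{i−1}·ρ(e_i | h_{<i}a_i), and let π̂ be the Bayesian Control Rule policy π̂(a_i | h_{<i}) := Σ_{ρ∈ℳ} w^ρ_{i−1}·π_ρ(a_i | h_{<i}). Then for every μ ∈ ℳ, every t ∈ ℕ and every history h_{1:t} with μ^{π_μ}(h_{1:t})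 > 0, the regret R^{ξ,π̂}_t(h_{1:t}) := log(μ^{π_μ}(h_{1:t}) / ξ^{π̂}(h_{1:t})) satisfies R^{ξ,π̂}_t(h_{1:t}) ≤ −log w'(μ) − Σ_{i=1}^t log w^μ_{i−1}. -/
/-- The history `h_{<k} = a_0 e_0 … a_{k−1} e_{k−1}` as a list of action–percept pairs. -/
def histList {A E : Type*} (a : ℕ → A) (e : ℕ → E) (k : ℕ) : List (A × E) :=
  (List.range k).map fun i => (a i, e i)

/-- `ρ(e_{1:t} ‖ a_{1:t}) := ∏_{k=1}^t ρ(e_k | h_{<k} a_k)` for an environment measure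
`env ρ : history → action → percept → ℝ`. -/
def envProd {M A E : Type*} (env : M → List (A × E) → A → E → ℝ)
    (a : ℕ → A) (e : ℕ → E) (ρ : M) (t : ℕ) : ℝ :=
  ∏ k ∈ Finset.range t, env ρ (histList a e k) (a k) (e k)

/-- The posterior weight `w^ρ_k := w'(ρ)·ρ(e_{<k+1} ‖ a_{<k+1}) / Σ_ν w'(ν)·ν(e_{<k+1} ‖ a_{<k+1})`
after `k` interaction steps. -/
noncomputable def postW {M A E : Type*} [Fintype M] (env : M → List (A × E) → A → E → ℝ)
    (w' : M → ℝ) (a : ℕ → A) (e : ℕ → E) (ρ : M) (k : ℕ) : ℝ :=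
  w' ρ * envProd env a e ρ k / ∑ ν, w' ν * envProd env a e ν k

/-- The Bayes-mixture environment probability of the percept sequence:
`ξ(e_{1:t} ‖ a_{1:t}) = ∏_{k=1}^t Σ_ρ w^ρ_{k−1}·ρ(e_k | h_{<k} a_k)`. -/
noncomputable def xiProd {M A E : Type*} [Fintype M] (env : M → List (A × E) → A → E → ℝ)
    (w' : M → ℝ) (a : ℕ → A) (e : ℕ → E) (t : ℕ) : ℝ :=
  ∏ k ∈ Finset.range t, ∑ ρ, postW env w' a e ρ k * env ρ (histList a e k) (a k) (e k)

/-- The agent–environment probability `ν^π(h_{1:t}) = ∏_{k=1}^t π(a_k | h_{<k})·ν(e_k | h_{<k} a_k)`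
for environment `ν = env ρ` and policy `π = pol ρ`. -/
def agentEnvProd {M A E : Type*} (env : M → List (A × E) → A → E → ℝ)
    (pol : M → List (A × E) → A → ℝ) (a : ℕ → A) (e : ℕ → E) (ρ : M) (t : ℕ) : ℝ :=
  ∏ k ∈ Finset.range t, pol ρ (histList a e k) (a k) * env ρ (histList a e k) (a k) (e k)

/-- The agent–environment probability of the history under the Bayes mixture environment `ξ`
and the Bayesian Control Rule policy `π̂(a_k | h_{<k}) := Σ_ρ w^ρ_{k−1}·π_ρ(a_k | h_{<k})`. -/
noncomputable def xiBCRProd {M A E : Type*} [Fintype M]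
    (env : M → List (A × E) → A → E → ℝ) (pol : M → List (A × E) → A → ℝ)
    (w' : M → ℝ) (a : ℕ → A) (e : ℕ → E) (t : ℕ) : ℝ :=
  ∏ k ∈ Finset.range t,
    (∑ ρ, postW env w' a e ρ k * pol ρ (histList a e k) (a k)) *
      (∑ ρ, postW env w' a e ρ k * env ρ (histList a e k) (a k) (e k))

/-- **Bayesian Control Rule regret bound.** For a finite class `M` of environment measures over
finite percept/action sets, each `μ ∈ M` paired with a policy `π_μ`, a prior `w'` positive on
`M`, every `μ ∈ M`, every `t` and every history with `μ^{π_μ}(h_{1:t}) > 0`, the regret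
satisfies `log (μ^{π_μ}(h_{1:t}) / ξ^{π̂}(h_{1:t})) ≤ −log w'(μ) − Σ_{i=1}^t log w^μ_{i−1}`. -/
theorem bcr_regret_bound {M A E : Type*} [Fintype M] [Fintype E] [Fintype A]
    (env : M → List (A × E) → A → E → ℝ)
    (henv_nonneg : ∀ ρ h x y, 0 ≤ env ρ h x y)
    (henv_sum : ∀ ρ h x, ∑ y, env ρ h x y = 1)
    (pol : M → List (A × E) → A → ℝ)
    (hpol_nonneg : ∀ ρ h x, 0 ≤ pol ρ h x)
    (hpol_sum : ∀ ρ h, ∑ x, pol ρ h x = 1)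
    (w' : M → ℝ) (hw'_pos : ∀ ρ, 0 < w' ρ) (hw'_sum : ∑ ρ, w' ρ = 1)
    (μ : M) (t : ℕ) (a : ℕ → A) (e : ℕ → E)
    (hpos : 0 < agentEnvProd env pol a e μ t) :
    Real.log (agentEnvProd env pol a e μ t / xiBCRProd env pol w' a e t) ≤
      -Real.log (w' μ) - ∑ k ∈ Finset.range t, Real.log (postW env w' a e μ k) := by
  classical
  set P : ℕ → ℝ := fun k => pol μ (histList a e k) (a k) with hPdef
  set Q : ℕ → ℝ := fun k => env μ (histList a e k) (a k) (e k) with hQdef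
  set D : ℕ → ℝ := fun k => ∑ ν, w' ν * envProd env a e ν k with hDdef
  set S1 : ℕ → ℝ := fun k => ∑ ρ, postW env w' a e ρ k * pol ρ (histList a e k) (a k)
    with hS1def
  set S2 : ℕ → ℝ := fun k => ∑ ρ, postW env w' a e ρ k * env ρ (histList a e k) (a k) (e k)
    with hS2def
  -- each factor of the agent-environment product is positive
  have hfac : ∀ k ∈ Finset.range t, 0 < P k * Q k := by
    intro k hk
    rcases (mul_nonneg (hpol_nonneg μ _ _) (henv_nonneg μ _ _ _)).lt_or_eq with h | h
    · exact h
    · exfalso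
      have : agentEnvProd env pol a e μ t = 0 := Finset.prod_eq_zero hk h.symm
      rw [this] at hpos; exact lt_irrefl _ hpos
  have hP : ∀ k, k < t → 0 < P k := by
    intro k hk
    have h := hfac k (Finset.mem_range.2 hk)
    have hq : (0:ℝ) ≤ Q k := henv_nonneg μ _ _ _
    nlinarith
  have hQ : ∀ k, k < t → 0 < Q k := by
    intro k hk
    have h := hfac k (Finset.mem_range.2 hk)
    have hp : (0:ℝ) ≤ P k := hpol_nonneg μ _ _
    nlinarith
  have henvProd_nonneg : ∀ ρ k, 0 ≤ envProd env a e ρ k := fun ρ k =>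
    Finset.prod_nonneg fun i _ => henv_nonneg ρ _ _ _
  have henvProdμ : ∀ k, k ≤ t → 0 < envProd env a e μ k := by
    intro k hk
    exact Finset.prod_pos fun i hi => hQ i (lt_of_lt_of_le (Finset.mem_range.1 hi) hk)
  have hD_pos : ∀ k, k ≤ t → 0 < D k := by
    intro k hk
    apply Finset.sum_pos' (fun ν _ => mul_nonneg (hw'_pos ν).le (henvProd_nonneg ν k))
    exact ⟨μ, Finset.mem_univ μ, mul_pos (hw'_pos μ) (henvProdμ k hk)⟩
  have hD0 : D 0 = 1 := by
    simp only [hDdef, envProd, Finset.range_zero, Finset.prod_empty, mul_one]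
    exact hw'_sum
  have hpostW_nonneg : ∀ ρ k, k ≤ t → 0 ≤ postW env w' a e ρ k := by
    intro ρ k hk
    exact div_nonneg (mul_nonneg (hw'_pos ρ).le (henvProd_nonneg ρ k)) (hD_pos k hk).le
  have hpostWμ_pos : ∀ k, k ≤ t → 0 < postW env w' a e μ k := by
    intro k hk
    exact div_pos (mul_pos (hw'_pos μ) (henvProdμ k hk)) (hD_pos k hk)
  -- S2 telescopes
  have hS2eq : ∀ k, k < t → S2 k = D (k + 1) / D k := by
    intro k hk
    have hDk : D k ≠ 0 := (hD_pos k hk.le).ne'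
    simp only [hS2def, hDdef, postW]
    rw [eq_div_iff hDk, Finset.sum_mul]
    apply Finset.sum_congr rfl
    intro ρ _
    have hstep : envProd env a e ρ (k + 1) =
        envProd env a e ρ k * env ρ (histList a e k) (a k) (e k) :=
      Finset.prod_range_succ _ _
    rw [hstep]
    have hS : (∑ x, w' x * envProd env a e x k) ≠ 0 := hDk
    simp only [hDdef]
    field_simp
  have htel : ∀ n, n ≤ t → ∏ k ∈ Finset.range n, S2 k = D n := by
    intro n hn
    induction n with
    | zero => simp [hD0]
    | succ m ih =>
      rw [Finset.prod_range_succ, ih (Nat.le_of_succ_le hn),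
        hS2eq m (Nat.lt_of_succ_le hn)]
      field_simp [(hD_pos m (Nat.le_of_succ_le hn)).ne']
  -- lower bound for S1
  have hS1_ge : ∀ k, k < t → postW env w' a e μ k * P k ≤ S1 k := by
    intro k hk
    exact Finset.single_le_sum
      (fun ρ _ => mul_nonneg (hpostW_nonneg ρ k hk.le) (hpol_nonneg ρ _ _))
      (Finset.mem_univ μ)
  -- split products
  have hxiBCR : xiBCRProd env pol w' a e t = (∏ k ∈ Finset.range t, S1 k) * D t := by
    rw [xiBCRProd, Finset.prod_mul_distrib, htel t le_rfl]
  set L : ℝ := ∏ k ∈ Finset.range t, postW env w' a e μ k with hLdef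
  set PP : ℝ := ∏ k ∈ Finset.range t, P k with hPPdef
  have hL_pos : 0 < L :=
    Finset.prod_pos fun k hk => hpostWμ_pos k (Finset.mem_range.1 hk).le
  have hPP_pos : 0 < PP := Finset.prod_pos fun k hk => hP k (Finset.mem_range.1 hk)
  have hProdS1_ge : L * PP ≤ ∏ k ∈ Finset.range t, S1 k := by
    rw [hLdef, hPPdef, ← Finset.prod_mul_distrib]
    apply Finset.prod_le_prod
    · intro k hk
      exact mul_nonneg (hpostW_nonneg μ k (Finset.mem_range.1 hk).le) (hpol_nonneg μ _ _)
    · intro k hk; exact hS1_ge k (Finset.mem_range.1 hk)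
  have hDt : 0 < D t := hD_pos t le_rfl
  have hdenom_pos : 0 < L * PP * D t := mul_pos (mul_pos hL_pos hPP_pos) hDt
  have hxi_pos : 0 < xiBCRProd env pol w' a e t := by
    rw [hxiBCR]
    exact mul_pos (lt_of_lt_of_le (mul_pos hL_pos hPP_pos) hProdS1_ge) hDt
  -- numerator form
  have hA : agentEnvProd env pol a e μ t = PP * envProd env a e μ t := by
    rw [agentEnvProd, hPPdef, envProd, ← Finset.prod_mul_distrib]
  set Ev : ℝ := envProd env a e μ t with hEvdef
  have hEv_pos : 0 < Ev := henvProdμ t le_rfl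
  -- key: w' μ * Ev ≤ D t
  have hkey : w' μ * Ev ≤ D t :=
    Finset.single_le_sum (fun ν _ => mul_nonneg (hw'_pos ν).le (henvProd_nonneg ν t))
      (Finset.mem_univ μ)
  -- ratio bound
  have hratio : agentEnvProd env pol a e μ t / xiBCRProd env pol w' a e t ≤
      1 / (w' μ * L) := by
    have h1 : agentEnvProd env pol a e μ t / xiBCRProd env pol w' a e t ≤
        agentEnvProd env pol a e μ t / (L * PP * D t) := by
      apply div_le_div_of_nonneg_left hpos.le hdenom_pos
      rw [hxiBCR]
      exact mul_le_mul_of_nonneg_right hProdS1_ge hDt.le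
    have h2 : agentEnvProd env pol a e μ t / (L * PP * D t) = Ev / (D t) / L := by
      rw [hA]
      field_simp
    have h3 : Ev / D t ≤ 1 / w' μ := by
      rw [div_le_div_iff₀ hDt (hw'_pos μ)]
      linarith
    have h4 : Ev / D t / L ≤ 1 / w' μ / L := by gcongr
    calc agentEnvProd env pol a e μ t / xiBCRProd env pol w' a e t
        ≤ Ev / D t / L := by rw [← h2]; exact h1
      _ ≤ 1 / w' μ / L := h4
      _ = 1 / (w' μ * L) := by rw [div_div]
  have hlog := Real.log_le_log (div_pos hpos hxi_pos) hratio
  refine le_trans hlog ?_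
  rw [one_div, Real.log_inv, Real.log_mul (hw'_pos μ).ne' hL_pos.ne', hLdef,
    Real.log_prod (fun k hk => (hpostWμ_pos k (Finset.mem_range.1 hk).le).ne')]
  linarith
end

section
/- (Active segments partition the set of binary temporal partitions) Fix D ∈ ℕ and a time t with 1 ≤ t ≤ 2^D, and for i ∈ {0,…,D} let s_i denote the unique segment of length 2^i in ActiveSegments_D(t). Then every 𝒫 ∈ C_D contains exactly one of the segments s_0, …, s_D; consequently the sets C_D^i := {𝒫 ∈ C_D : s_i ∈ 𝒫}, i = 0,…,D, are pairwise disjoint with ∪_{i=0}^D C_D^i = C_D, and for any probability weights w on C_D (w(𝒫) ≥ 0, Σ_{𝒫∈C_D} w(𝒫) = 1) it holds that Σ_{i=0}^D Σ_{𝒫∈C_D^i} w(𝒫) = 1. -/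
lemma CD_bounds_s17 : ∀ D t, ∀ P ∈ CD D t, ∀ x ∈ P, t ≤ x.1 ∧ x.1 ≤ x.2 ∧ x.2 + 1 ≤ t + 2 ^ D := by
  intro D
  induction D with
  | zero =>
    intro t P hP x hx
    simp [CD] at hP
    subst hP
    simp at hx
    subst hx
    simp
  | succ D ih =>
    intro t P hP x hx
    have h1 : (1:ℕ) ≤ 2 ^ (D+1) := Nat.one_le_two_pow
    rcases Finset.mem_insert.mp hP with h | h
    · subst h
      simp at hx
      subst hx
      constructor
      · rfl
      constructor <;> omega
    · obtain ⟨p, hp, rfl⟩ := Finset.mem_image.mp h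
      obtain ⟨hp1, hp2⟩ := Finset.mem_product.mp hp
      rcases Finset.mem_union.mp hx with h' | h'
      · have := ih t p.1 hp1 x h'
        have h2 : 2 ^ D ≤ 2 ^ (D+1) := Nat.pow_le_pow_right (by norm_num) (by omega)
        omega
      · have := ih (t + 2 ^ D) p.2 hp2 x h'
        have h2 : 2 ^ D + 2 ^ D = 2 ^ (D+1) := by ring
        omega

lemma CD_block : ∀ D t, ∀ P ∈ CD D t, ∀ x ∈ P,
    ∃ i ≤ D, ∃ k, x.1 = t + k * 2 ^ i ∧ x.2 + 1 = x.1 + 2 ^ i := by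
  intro D
  induction D with
  | zero =>
    intro t P hP x hx
    simp [CD] at hP
    subst hP
    simp at hx
    subst hx
    exact ⟨0, le_refl _, 0, by simp, by simp⟩
  | succ D ih =>
    intro t P hP x hx
    have h1 : (1:ℕ) ≤ 2 ^ (D+1) := Nat.one_le_two_pow
    rcases Finset.mem_insert.mp hP with h | h
    · subst h
      simp at hx
      subst hx
      exact ⟨D+1, le_refl _, 0, by simp, by simp; omega⟩
    · obtain ⟨p, hp, rfl⟩ := Finset.mem_image.mp h
      obtain ⟨hp1, hp2⟩ := Finset.mem_product.mp hp
      rcases Finset.mem_union.mp hx with h' | h'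
      · obtain ⟨i, hi, k, hk1, hk2⟩ := ih t p.1 hp1 x h'
        exact ⟨i, by omega, k, hk1, hk2⟩
      · obtain ⟨i, hi, k, hk1, hk2⟩ := ih (t + 2 ^ D) p.2 hp2 x h'
        refine ⟨i, by omega, k + 2 ^ (D - i), ?_, hk2⟩
        have : 2 ^ (D - i) * 2 ^ i = 2 ^ D := by
          rw [← pow_add]; congr 1; omega
        rw [hk1, add_mul, this]; ring

lemma CD_unique_cover : ∀ D t, ∀ P ∈ CD D t, ∀ u, t ≤ u → u + 1 ≤ t + 2 ^ D →
    ∃! x, x ∈ P ∧ x.1 ≤ u ∧ u ≤ x.2 := by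
  intro D
  induction D with
  | zero =>
    intro t P hP u hu1 hu2
    simp [CD] at hP
    subst hP
    refine ⟨(t,t), ⟨by simp, by simp at hu2; omega, by simp at hu2; omega⟩, ?_⟩
    rintro y ⟨hy, _, _⟩
    simpa using hy
  | succ D ih =>
    intro t P hP u hu1 hu2
    have h1 : (1:ℕ) ≤ 2 ^ D := Nat.one_le_two_pow
    have h2 : 2 ^ D + 2 ^ D = 2 ^ (D+1) := by ring
    rcases Finset.mem_insert.mp hP with h | h
    · subst h
      refine ⟨(t, t + 2 ^ (D+1) - 1), ⟨by simp, by omega, by omega⟩, ?_⟩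
      rintro y ⟨hy, _, _⟩
      simpa using hy
    · obtain ⟨p, hp, rfl⟩ := Finset.mem_image.mp h
      obtain ⟨hp1, hp2⟩ := Finset.mem_product.mp hp
      by_cases hc : u + 1 ≤ t + 2 ^ D
      · obtain ⟨x, ⟨hx, hx1, hx2⟩, hxu⟩ := ih t p.1 hp1 u hu1 hc
        refine ⟨x, ⟨Finset.mem_union_left _ hx, hx1, hx2⟩, ?_⟩
        rintro y ⟨hy, hy1, hy2⟩
        rcases Finset.mem_union.mp hy with h' | h'
        · exact hxu y ⟨h', hy1, hy2⟩
        · have := CD_bounds_s17 D (t + 2 ^ D) p.2 hp2 y h'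
          omega
      · obtain ⟨x, ⟨hx, hx1, hx2⟩, hxu⟩ := ih (t + 2 ^ D) p.2 hp2 u (by omega) (by omega)
        refine ⟨x, ⟨Finset.mem_union_right _ hx, hx1, hx2⟩, ?_⟩
        rintro y ⟨hy, hy1, hy2⟩
        rcases Finset.mem_union.mp hy with h' | h'
        · have := CD_bounds_s17 D t p.1 hp1 y h'
          omega
        · exact hxu y ⟨h', hy1, hy2⟩

lemma block_unique {t u m k k' : ℕ} (hm : 1 ≤ m)
    (h1 : t + k * m ≤ u) (h2 : u + 1 ≤ t + (k+1) * m)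
    (h1' : t + k' * m ≤ u) (h2' : u + 1 ≤ t + (k'+1) * m) : k = k' := by
  by_contra h
  rcases Nat.lt_or_ge k k' with hlt | hge
  · have : (k+1) * m ≤ k' * m := Nat.mul_le_mul_right m (by omega)
    omega
  · have hlt : k' < k := by omega
    have : (k'+1) * m ≤ k * m := Nat.mul_le_mul_right m (by omega)
    omega

/-- **Active segments partition the set of binary temporal partitions.** Fix `1 ≤ t ≤ 2^D`
and let `s i` be the unique active segment of length `2^i` at time `t`, for `i = 0,…,D`.
Then every `𝒫 ∈ C_D` contains exactly one of `s 0, …, s D`; consequently the sets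
`C_D^i := {𝒫 ∈ C_D : s i ∈ 𝒫}` are pairwise disjoint with union `C_D`, and for any probability
weights `w` on `C_D` it holds that `Σ_{i=0}^D Σ_{𝒫 ∈ C_D^i} w(𝒫) = 1`. -/
theorem active_segments_partition_CD (D t : ℕ) (ht1 : 1 ≤ t) (ht2 : t ≤ 2 ^ D)
    (s : ℕ → ℕ × ℕ)
    (hs : ∀ i ≤ D, s i ∈ ActiveSegments D t ∧ (s i).2 + 1 - (s i).1 = 2 ^ i) :
    (∀ P ∈ CD D 1, ∃! i, i ≤ D ∧ s i ∈ P) ∧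
      (∀ i ≤ D, ∀ j ≤ D, i ≠ j →
        Disjoint ((CD D 1).filter fun P => s i ∈ P) ((CD D 1).filter fun P => s j ∈ P)) ∧
      ((Finset.range (D + 1)).biUnion fun i => (CD D 1).filter fun P => s i ∈ P) = CD D 1 ∧
      (∀ w : Finset (ℕ × ℕ) → ℝ, (∀ P ∈ CD D 1, 0 ≤ w P) → (∑ P ∈ CD D 1, w P) = 1 →
        ∑ i ∈ Finset.range (D + 1), ∑ P ∈ (CD D 1).filter (fun P => s i ∈ P), w P = 1) := by
  have hsb : ∀ i ≤ D, ∃ k, (s i).1 = 1 + k * 2 ^ i ∧ (s i).2 + 1 = (s i).1 + 2 ^ i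
      ∧ (s i).1 ≤ t ∧ t ≤ (s i).2 := by
    intro i hi
    obtain ⟨⟨h1, h2, P, hP, hmem⟩, hlen⟩ := hs i hi
    obtain ⟨j, hj, k, hk1, hk2⟩ := CD_block D 1 P hP _ hmem
    have hij : (2:ℕ) ^ i = 2 ^ j := by omega
    have : i = j := Nat.pow_right_injective (le_refl 2) hij
    subst this
    exact ⟨k, hk1, hk2, h1, h2⟩
  have part1 : ∀ P ∈ CD D 1, ∃! i, i ≤ D ∧ s i ∈ P := by
    intro P hP
    obtain ⟨x, ⟨hx, hx1, hx2⟩, hxu⟩ := CD_unique_cover D 1 P hP t ht1 (by omega)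
    obtain ⟨i, hi, k, hk1, hk2⟩ := CD_block D 1 P hP x hx
    obtain ⟨k', hk1', hk2', hst1, hst2⟩ := hsb i hi
    have hm : (1:ℕ) ≤ 2 ^ i := Nat.one_le_two_pow
    have hkk : k = k' := block_unique (t := 1) (u := t) (m := 2 ^ i) (k := k) (k' := k') hm
      (by omega) (by rw [add_mul, one_mul]; omega)
      (by omega) (by rw [add_mul, one_mul]; omega)
    have hxs : x = s i := by
      subst hkk
      apply Prod.ext <;> omega
    refine ⟨i, ⟨hi, hxs ▸ hx⟩, ?_⟩
    rintro j ⟨hj, hsjP⟩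
    obtain ⟨k2, hj1, hj2, hjt1, hjt2⟩ := hsb j hj
    have : s j = x := hxu (s j) ⟨hsjP, hjt1, hjt2⟩
    rw [this] at hj2
    have h2ij : (2:ℕ) ^ j = 2 ^ i := by omega
    exact Nat.pow_right_injective (le_refl 2) h2ij
  have part2 : ∀ i ≤ D, ∀ j ≤ D, i ≠ j →
      Disjoint ((CD D 1).filter fun P => s i ∈ P) ((CD D 1).filter fun P => s j ∈ P) := by
    intro i hi j hj hij
    rw [Finset.disjoint_left]
    intro P hPi hPj
    obtain ⟨hP, hsi⟩ := Finset.mem_filter.mp hPi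
    obtain ⟨_, hsj⟩ := Finset.mem_filter.mp hPj
    obtain ⟨u, _, hu⟩ := part1 P hP
    exact hij ((hu i ⟨hi, hsi⟩).trans (hu j ⟨hj, hsj⟩).symm)
  have part3 : ((Finset.range (D + 1)).biUnion fun i => (CD D 1).filter fun P => s i ∈ P)
      = CD D 1 := by
    ext P
    simp only [Finset.mem_biUnion, Finset.mem_filter, Finset.mem_range]
    constructor
    · rintro ⟨i, _, hP, _⟩; exact hP
    · intro hP
      obtain ⟨i, ⟨hi, hsi⟩, _⟩ := part1 P hP
      exact ⟨i, by omega, hP, hsi⟩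
  refine ⟨part1, part2, part3, ?_⟩
  intro w _ hsum
  rw [← Finset.sum_biUnion, part3]
  · exact hsum
  · intro i hi j hj hij
    simp only [Finset.coe_range, Set.mem_Iio] at hi hj
    exact part2 i (by omega) j (by omega) hij
end

section
/- (Binary temporal partition covering lemma) Let D ∈ ℕ and n := 2^D, and let 𝒫 be any temporal partition of {1,…,n} into segments. Then there exists a binary temporal partition 𝒫' ∈ C_D such that every segment endpoint occurring in 𝒫 occurs as a segment endpoint in 𝒫' (so every segment of 𝒫 is a union of consecutive segments of 𝒫'), and |𝒫'| ≤ |𝒫|·(⌈lb n⌉ + 1) = |𝒫|·(D + 1). -/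
lemma bpc_key (P : Finset (ℕ × ℕ)) (N : ℕ)
    (hseg : ∀ s ∈ P, 1 ≤ s.1 ∧ s.1 ≤ s.2 ∧ s.2 ≤ N)
    (hpart : ∀ i ∈ Finset.Icc 1 N, ∃! s, s ∈ P ∧ s.1 ≤ i ∧ i ≤ s.2) :
    ∀ D t, 1 ≤ t → t + 2 ^ D - 1 ≤ N →
    ∃ P' ∈ CD D t,
      (∀ s ∈ P,
        (t ≤ s.1 → s.1 ≤ t + 2 ^ D - 1 → ∃ s' ∈ P', s'.1 = s.1) ∧
        (t ≤ s.2 → s.2 ≤ t + 2 ^ D - 1 → ∃ s' ∈ P', s'.2 = s.2)) ∧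
      P'.card ≤ ((P.filter fun s => s.1 ≤ t + 2 ^ D - 1 ∧ t ≤ s.2).card - 1) * D + 1 := by
  intro D
  induction D with
  | zero =>
    intro t ht hN
    refine ⟨{(t, t)}, by simp [CD], ?_, by simp⟩
    intro s hs
    constructor
    · intro h1 h2
      exact ⟨(t, t), Finset.mem_singleton_self _, by simp at h2 ⊢; omega⟩
    · intro h1 h2
      exact ⟨(t, t), Finset.mem_singleton_self _, by simp at h2 ⊢; omega⟩
  | succ D ih =>
    intro t ht hN
    have h2 : 1 ≤ 2 ^ D := Nat.one_le_two_pow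
    have hpow : 2 ^ (D + 1) = 2 ^ D + 2 ^ D := by rw [pow_succ]; omega
    by_cases hcov : ∃ s ∈ P, s.1 ≤ t ∧ t + 2 ^ (D + 1) - 1 ≤ s.2
    · -- whole interval covered by one segment
      obtain ⟨s₀, hs₀, h₀1, h₀2⟩ := hcov
      refine ⟨{(t, t + 2 ^ (D + 1) - 1)}, ?_, ?_, Nat.le_add_left 1 _⟩
      · simp [CD]
      · intro s hs
        obtain ⟨hs1, hs12, hs2⟩ := hseg s hs
        constructor
        · intro h1 h2
          obtain ⟨u, hu, huniq⟩ := hpart s.1 (Finset.mem_Icc.mpr ⟨hs1, le_trans hs12 hs2⟩)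
          have e1 : s = u := huniq s ⟨hs, le_rfl, hs12⟩
          have e2 : s₀ = u := huniq s₀ ⟨hs₀, le_trans h₀1 h1, le_trans h2 h₀2⟩
          refine ⟨(t, t + 2 ^ (D + 1) - 1), Finset.mem_singleton_self _, ?_⟩
          have : s = s₀ := e1.trans e2.symm
          have : s.1 ≤ t := this ▸ h₀1
          simpa using by omega
        · intro h1 h2
          obtain ⟨u, hu, huniq⟩ := hpart s.2 (Finset.mem_Icc.mpr ⟨le_trans hs1 hs12, hs2⟩)
          have e1 : s = u := huniq s ⟨hs, hs12, le_rfl⟩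
          have e2 : s₀ = u := huniq s₀ ⟨hs₀, le_trans h₀1 h1, le_trans h2 h₀2⟩
          refine ⟨(t, t + 2 ^ (D + 1) - 1), Finset.mem_singleton_self _, ?_⟩
          have : s = s₀ := e1.trans e2.symm
          have : t + 2 ^ (D + 1) - 1 ≤ s.2 := this ▸ h₀2
          simpa using by omega
    · -- split into two halves
      obtain ⟨P₁, hP₁mem, hP₁end, hP₁card⟩ := ih t ht (by omega)
      obtain ⟨P₂, hP₂mem, hP₂end, hP₂card⟩ := ih (t + 2 ^ D) (by omega) (by omega)
      refine ⟨P₁ ∪ P₂, ?_, ?_, ?_⟩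
      · have : P₁ ∪ P₂ ∈
            (CD D t ×ˢ CD D (t + 2 ^ D)).image fun p => p.1 ∪ p.2 :=
          Finset.mem_image.mpr ⟨(P₁, P₂), Finset.mem_product.mpr ⟨hP₁mem, hP₂mem⟩, rfl⟩
        simp only [CD]
        exact Finset.mem_insert.mpr (Or.inr this)
      · intro s hs
        constructor
        · intro h1 h2
          by_cases hc : s.1 ≤ t + 2 ^ D - 1
          · obtain ⟨s', hs', he⟩ := (hP₁end s hs).1 h1 hc
            exact ⟨s', Finset.mem_union_left _ hs', he⟩
          · obtain ⟨s', hs', he⟩ := (hP₂end s hs).1 (by omega) (by omega)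
            exact ⟨s', Finset.mem_union_right _ hs', he⟩
        · intro h1 h2
          by_cases hc : s.2 ≤ t + 2 ^ D - 1
          · obtain ⟨s', hs', he⟩ := (hP₁end s hs).2 h1 hc
            exact ⟨s', Finset.mem_union_left _ hs', he⟩
          · obtain ⟨s', hs', he⟩ := (hP₂end s hs).2 (by omega) (by omega)
            exact ⟨s', Finset.mem_union_right _ hs', he⟩
      · -- cardinality bound
        set F := P.filter fun s => s.1 ≤ t + 2 ^ (D + 1) - 1 ∧ t ≤ s.2 with hF
        set F₁ := P.filter fun s => s.1 ≤ t + 2 ^ D - 1 ∧ t ≤ s.2 with hF₁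
        set F₂ := P.filter fun s => s.1 ≤ t + 2 ^ D + 2 ^ D - 1 ∧ t + 2 ^ D ≤ s.2 with hF₂
        have hmidN : t + 2 ^ D ≤ N := by omega
        -- segments containing t and t + 2^(D+1) - 1
        obtain ⟨sa, ⟨hsaP, hsa1, hsa2⟩, _⟩ := hpart t (Finset.mem_Icc.mpr ⟨ht, by omega⟩)
        obtain ⟨sb, ⟨hsbP, hsb1, hsb2⟩, _⟩ :=
          hpart (t + 2 ^ (D + 1) - 1) (Finset.mem_Icc.mpr ⟨by omega, hN⟩)
        have hsaF : sa ∈ F := Finset.mem_filter.mpr ⟨hsaP, by omega⟩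
        have hsbF : sb ∈ F := Finset.mem_filter.mpr ⟨hsbP, by omega⟩
        have hsmF₂ : ∃ s, s ∈ F₂ := by
          obtain ⟨sm, ⟨hsmP, hsm1, hsm2⟩, _⟩ :=
            hpart (t + 2 ^ D) (Finset.mem_Icc.mpr ⟨by omega, hmidN⟩)
          exact ⟨sm, Finset.mem_filter.mpr ⟨hsmP, by omega⟩⟩
        have hne : sa ≠ sb := by
          intro h
          exact hcov ⟨sa, hsaP, hsa1, h ▸ hsb2⟩
        have hK : 2 ≤ F.card := Finset.one_lt_card.mpr ⟨sa, hsaF, sb, hsbF, hne⟩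
        have hK₁ : 1 ≤ F₁.card :=
          Finset.card_pos.mpr ⟨sa, Finset.mem_filter.mpr ⟨hsaP, by omega⟩⟩
        have hK₂ : 1 ≤ F₂.card := Finset.card_pos.mpr hsmF₂
        have hsub : F₁.card + F₂.card ≤ F.card + 1 := by
          have hsubs : F₁ ∪ F₂ ⊆ F := by
            intro a ha
            rcases Finset.mem_union.mp ha with h | h <;>
              · obtain ⟨haP, ha1, ha2⟩ := Finset.mem_filter.mp h
                exact Finset.mem_filter.mpr ⟨haP, by omega⟩
          have hint : (F₁ ∩ F₂).card ≤ 1 := by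
            apply Finset.card_le_one.mpr
            intro a ha b hb
            obtain ⟨haP, ha1, ha2⟩ := Finset.mem_filter.mp (Finset.mem_inter.mp ha).1
            obtain ⟨_, ha1', ha2'⟩ := Finset.mem_filter.mp (Finset.mem_inter.mp ha).2
            obtain ⟨hbP, hb1, hb2⟩ := Finset.mem_filter.mp (Finset.mem_inter.mp hb).1
            obtain ⟨_, hb1', hb2'⟩ := Finset.mem_filter.mp (Finset.mem_inter.mp hb).2
            obtain ⟨u, hu, huniq⟩ :=
              hpart (t + 2 ^ D) (Finset.mem_Icc.mpr ⟨by omega, hmidN⟩)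
            have ea := huniq a ⟨haP, by omega, ha2'⟩
            have eb := huniq b ⟨hbP, by omega, hb2'⟩
            exact ea.trans eb.symm
          calc F₁.card + F₂.card = (F₁ ∪ F₂).card + (F₁ ∩ F₂).card :=
                (Finset.card_union_add_card_inter F₁ F₂).symm
            _ ≤ F.card + 1 := add_le_add (Finset.card_le_card hsubs) hint
        calc (P₁ ∪ P₂).card ≤ P₁.card + P₂.card := Finset.card_union_le _ _
          _ ≤ ((F₁.card - 1) * D + 1) + ((F₂.card - 1) * D + 1) := add_le_add hP₁card hP₂card
          _ = ((F₁.card - 1) + (F₂.card - 1)) * D + 2 := by ring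
          _ ≤ (F.card - 1) * D + 2 :=
              add_le_add_left (Nat.mul_le_mul_right D (by omega)) 2
          _ ≤ (F.card - 1) * (D + 1) + 1 := by
              rw [Nat.mul_add, Nat.mul_one, add_assoc]
              exact add_le_add_right (by omega) _

/-- **Binary temporal partition covering lemma.** Let `n := 2^D` and let `P` be any temporal
partition of `{1,…,n}` into segments.  Then there is a binary temporal partition `P' ∈ C_D`
such that every segment endpoint occurring in `P` occurs as a segment endpoint in `P'`, and
`|P'| ≤ |P|·(⌈lb n⌉ + 1) = |P|·(D + 1)`. -/
theorem binary_partition_covering (D : ℕ) (P : Finset (ℕ × ℕ))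
    (hseg : ∀ s ∈ P, 1 ≤ s.1 ∧ s.1 ≤ s.2 ∧ s.2 ≤ 2 ^ D)
    (hpart : ∀ i ∈ Finset.Icc 1 (2 ^ D), ∃! s, s ∈ P ∧ s.1 ≤ i ∧ i ≤ s.2) :
    ∃ P' ∈ CD D 1,
      (∀ s ∈ P, (∃ s' ∈ P', s'.1 = s.1) ∧ (∃ s' ∈ P', s'.2 = s.2)) ∧
      P'.card ≤ P.card * (Nat.clog 2 (2 ^ D) + 1) ∧
      P.card * (Nat.clog 2 (2 ^ D) + 1) = P.card * (D + 1) := by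
  have h2 : 1 ≤ 2 ^ D := Nat.one_le_two_pow
  have hclog : Nat.clog 2 (2 ^ D) = D := Nat.clog_pow 2 D (by norm_num)
  obtain ⟨P', hP'mem, hP'end, hP'card⟩ :=
    bpc_key P (2 ^ D) hseg hpart D 1 le_rfl (by omega)
  refine ⟨P', hP'mem, ?_, ?_, by rw [hclog]⟩
  · intro s hs
    obtain ⟨hs1, hs12, hs2⟩ := hseg s hs
    exact ⟨(hP'end s hs).1 hs1 (by omega), (hP'end s hs).2 (by omega) (by omega)⟩
  · rw [hclog]
    have hPpos : 1 ≤ P.card := by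
      obtain ⟨s, ⟨hsP, _⟩, _⟩ := hpart 1 (Finset.mem_Icc.mpr ⟨le_rfl, h2⟩)
      exact Finset.card_pos.mpr ⟨s, hsP⟩
    have hKle : (P.filter fun s => s.1 ≤ 1 + 2 ^ D - 1 ∧ 1 ≤ s.2).card ≤ P.card :=
      Finset.card_filter_le _ _
    calc P'.card ≤ ((P.filter fun s => s.1 ≤ 1 + 2 ^ D - 1 ∧ 1 ≤ s.2).card - 1) * D + 1 :=
          hP'card
      _ ≤ P.card * D + 1 := add_le_add_left (Nat.mul_le_mul_right D (by omega)) 1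
      _ ≤ P.card * (D + 1) := by rw [Nat.mul_add, Nat.mul_one]; omega
end
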